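/- arXiv:2301.04953 — 4 statements merged into one kernel-verified Lean document; each statement's English description precedes it below -/
import Mathlib

section
/- (Tower construction.) Let ℱ¹⋉s be a fort of length ℓ, and let 𝒞₁,…,𝒞ₙ be the integer cells of ℱ¹ ordered compatibly with their order in ℝ. Suppose that for each i with 𝒞ᵢ an interval one is given a fort ℱᵢ of length ℓ and a morphism φᵢ: ℱᵢ→(0,1)⋉s(𝒞ᵢ) (the fort over (0,1) with constant fiber s(𝒞ᵢ)), and that for each i with 𝒞ᵢ a point one is given a fort 𝒦ᵢ of length ℓ−1 and a morphism ψᵢ: 𝒦ᵢ→s(𝒞ᵢ); in the latter case set ℱᵢ := {0}×𝒦ᵢ and φᵢ := id_{{0}}×ψᵢ. Let mᵢ := sup π₁(ℱᵢ) (so mᵢ=0 when 𝒞ᵢ is a point) and m₀ := 0. Then ℱ := ⋃_{i=1}^{n} t_{m₀+…+m_{i−1}}(ℱᵢ) is a fort of length ℓ, where t_m(x₁,…,x_ℓ) := (x₁+m,x₂,…,x_ℓ), and the map φ: ℱ→ℱ¹⋉s which on t_{m₀+…+m_{i−1}}(ℱᵢ) equals the composition of t_{−(m₀+…+m_{i−1})},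 then φᵢ, then the translation in the first coordinate carrying b(𝒞ᵢ) onto 𝒞ᵢ (where b(𝒞ᵢ)=(0,1) if 𝒞ᵢ is an interval and b(𝒞ᵢ)={0} if 𝒞ᵢ is a point), is a morphism of forts. -/
open Set

namespace Forts

/-- An integer cell of length 1: a singleton `{k}` or an open interval `(k, k+1)`, `k : ℤ`. -/
def Cell1 (S : Set ℝ) : Prop :=
  ∃ k : ℤ, S = {(k : ℝ)} ∨ S = Set.Ioo (k : ℝ) ((k : ℝ) + 1)

/-- An integer cell of length ℓ: a product of ℓ integer cells of length 1. -/
def Cell {ℓ : ℕ} (S : Set (Fin ℓ → ℝ)) : Prop :=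
  ∃ c : Fin ℓ → Set ℝ, (∀ i, Cell1 (c i)) ∧ S = {x | ∀ i, x i ∈ c i}

/-- `cellsOf S` is the collection of integer cells contained in `S`. -/
def cellsOf {ℓ : ℕ} (S : Set (Fin ℓ → ℝ)) : Set (Set (Fin ℓ → ℝ)) :=
  {C | Cell C ∧ C ⊆ S}

/-- Forts, defined inductively along the first coordinate: a fort of length 1 is an
interval `(0, n)` with `n ≥ 1`; given a fort `F1` of length 1 and an assignment `s` of a
fort of length ℓ to each integer cell of `F1`, the set `F1 ⋉ s = ⋃_{C ∈ C(F1)} C × s(C)`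
is a fort of length `ℓ + 1`. -/
inductive Fort : (ℓ : ℕ) → Set (Fin ℓ → ℝ) → Prop
  | base (n : ℕ) (hn : 0 < n) : Fort 1 {x : Fin 1 → ℝ | x 0 ∈ Set.Ioo (0 : ℝ) (n : ℝ)}
  | step {ℓ : ℕ} (F1 : Set (Fin 1 → ℝ)) (s : Set (Fin 1 → ℝ) → Set (Fin ℓ → ℝ))
      (hF1 : Fort 1 F1) (hs : ∀ C ∈ cellsOf F1, Fort ℓ (s C)) :
      Fort (ℓ + 1)
        {x : Fin (ℓ + 1) → ℝ | ∃ C ∈ cellsOf F1, (fun _ : Fin 1 => x 0) ∈ C ∧ Fin.tail x ∈ s C}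

/-- A map between subsets of ℝ^ℓ is precellular if each coordinate function depends only on
the first `i` coordinates and is strictly increasing in the `i`-th coordinate. -/
def Precellular {ℓ : ℕ} (X : Set (Fin ℓ → ℝ)) (f : (Fin ℓ → ℝ) → (Fin ℓ → ℝ)) : Prop :=
  (∀ i : Fin ℓ, ∀ x ∈ X, ∀ y ∈ X, (∀ j : Fin ℓ, j ≤ i → x j = y j) → f x i = f y i) ∧
  (∀ i : Fin ℓ, ∀ x ∈ X, ∀ y ∈ X, (∀ j : Fin ℓ, j < i → x j = y j) → x i < y i → f x i < f y i)

/-- A morphism of forts: surjective, precellular, maps integer cells into integer cells, and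
is continuous on each integer cell. -/
def Morphism {ℓ : ℕ} (F G : Set (Fin ℓ → ℝ)) (φ : (Fin ℓ → ℝ) → (Fin ℓ → ℝ)) : Prop :=
  φ '' F = G ∧ Precellular F φ ∧
    ∀ C ∈ cellsOf F, (∃ C₂ ∈ cellsOf G, φ '' C ⊆ C₂) ∧ ContinuousOn φ C

/-- Two morphisms are combinatorially equivalent if they map each integer cell of the source
into the same integer cell of the target. -/
def CombEquiv {ℓ : ℕ} (F G : Set (Fin ℓ → ℝ)) (φ ψ : (Fin ℓ → ℝ) → (Fin ℓ → ℝ)) : Prop :=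
  ∀ C ∈ cellsOf F, ∃ C₂ ∈ cellsOf G, φ '' C ⊆ C₂ ∧ ψ '' C ⊆ C₂

/-- Projection to the first `i` coordinates. -/
def proj {ℓ : ℕ} (i : ℕ) (h : i ≤ ℓ) (x : Fin ℓ → ℝ) : Fin i → ℝ :=
  fun j => x (Fin.castLE h j)

/-- The last `ℓ - i` coordinates. -/
def tailpart {ℓ i : ℕ} (h : i ≤ ℓ) (x : Fin ℓ → ℝ) : Fin (ℓ - i) → ℝ :=
  fun j => x ⟨i + (j : ℕ), by have := j.2; omega⟩

/-- Glue a prefix of length `i` with a suffix of length `ℓ - i`. -/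
def glue {ℓ i : ℕ} (h : i ≤ ℓ) (x : Fin i → ℝ) (y : Fin (ℓ - i) → ℝ) : Fin ℓ → ℝ :=
  fun j => if hj : (j : ℕ) < i then x ⟨(j : ℕ), hj⟩
    else y ⟨(j : ℕ) - i, by have := j.2; omega⟩

/-- The fiber `X_x = {y : (x, y) ∈ X}` of `X ⊆ ℝ^ℓ` over `x ∈ ℝ^i`. -/
def fiber {ℓ i : ℕ} (h : i ≤ ℓ) (X : Set (Fin ℓ → ℝ)) (x : Fin i → ℝ) :
    Set (Fin (ℓ - i) → ℝ) :=
  {y | glue h x y ∈ X}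

end Forts

namespace Forts

/-- The fort `(0, n)` of length 1. -/
def F1set (n : ℕ) : Set (Fin 1 → ℝ) := {x | x 0 ∈ Set.Ioo (0 : ℝ) (n : ℝ)}

/-- The `i`-th integer cell of `(0, n)` (0-indexed, ordered compatibly with ℝ):
`(i/2, i/2 + 1)` for even `i`, the point `{(i+1)/2}` for odd `i`. -/
def cSeq (i : ℕ) : Set (Fin 1 → ℝ) :=
  if i % 2 = 0 then {x | x 0 ∈ Set.Ioo (((i / 2 : ℕ) : ℝ)) (((i / 2 : ℕ) : ℝ) + 1)}
  else {x | x 0 = (((i + 1) / 2 : ℕ) : ℝ)}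

/-- The fort `ℱ¹ ⋉ s` over `ℱ¹ = (0, n)`. -/
def ltimes {m : ℕ} (n : ℕ) (s : Set (Fin 1 → ℝ) → Set (Fin m → ℝ)) :
    Set (Fin (m + 1) → ℝ) :=
  {x | ∃ C ∈ cellsOf (F1set n), (fun _ : Fin 1 => x 0) ∈ C ∧ Fin.tail x ∈ s C}

/-- Translation by `a` in the first coordinate: `t_a(x₁, …, x_ℓ) = (x₁ + a, x₂, …, x_ℓ)`. -/
def tmap {m : ℕ} (a : ℝ) (x : Fin (m + 1) → ℝ) : Fin (m + 1) → ℝ :=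
  fun j => if j = 0 then x 0 + a else x j

/-- The offset `m₀ + ⋯ + m_{i-1}` where `m_j = sup π₁(ℱ_j)`. -/
noncomputable def offsets {m : ℕ} (F : ℕ → Set (Fin (m + 1) → ℝ)) (i : ℕ) : ℝ :=
  ∑ j ∈ Finset.range i, sSup ((fun x : Fin (m + 1) → ℝ => x 0) '' F j)

/-- The translation amount carrying the basic cell `b(𝒞ᵢ)` onto `𝒞ᵢ`:
`i/2` if `𝒞ᵢ` is an interval, `(i+1)/2` if `𝒞ᵢ` is a point. -/
def tgtShift (i : ℕ) : ℝ :=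
  if i % 2 = 0 then ((i / 2 : ℕ) : ℝ) else (((i + 1) / 2 : ℕ) : ℝ)


/-! ### Auxiliary lemmas -/

section Aux

lemma fort_zero_elim {X : Set (Fin 0 → ℝ)} (h : Fort 0 X) : False := by
  cases h

@[simp] lemma tmap_apply_zero {m : ℕ} (a : ℝ) (x : Fin (m+1) → ℝ) :
    tmap a x 0 = x 0 + a := if_pos rfl

lemma tmap_apply_ne {m : ℕ} (a : ℝ) (x : Fin (m+1) → ℝ) {j : Fin (m+1)} (hj : j ≠ 0) :
    tmap a x j = x j := if_neg hj

lemma tmap_tmap {m : ℕ} (a b : ℝ) (x : Fin (m+1) → ℝ) :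
    tmap a (tmap b x) = tmap (b + a) x := by
  funext j
  by_cases hj : j = 0
  · subst hj; simp [tmap]; ring
  · simp [tmap, hj]

@[simp] lemma tmap_zero {m : ℕ} (x : Fin (m+1) → ℝ) : tmap 0 x = x := by
  funext j
  by_cases hj : j = 0
  · subst hj; simp [tmap]
  · simp [tmap, hj]

@[simp] lemma tmap_tail {m : ℕ} (a : ℝ) (x : Fin (m+1) → ℝ) :
    Fin.tail (tmap a x) = Fin.tail x := by
  funext j
  simp [Fin.tail, tmap_apply_ne a x (Fin.succ_ne_zero j)]

lemma continuous_tmap {m : ℕ} (a : ℝ) : Continuous (tmap (m := m) a) := by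
  apply continuous_pi
  intro j
  by_cases hj : j = 0
  · subst hj
    simp only [tmap, if_pos rfl]
    exact (continuous_apply _).add continuous_const
  · simp only [tmap, if_neg hj]
    exact continuous_apply _

lemma tmap_mem_image {m : ℕ} (a : ℝ) (S : Set (Fin (m+1) → ℝ)) (x : Fin (m+1) → ℝ) :
    x ∈ tmap a '' S ↔ tmap (-a) x ∈ S := by
  constructor
  · rintro ⟨y, hy, rfl⟩
    rwa [tmap_tmap, add_neg_cancel, tmap_zero]
  · intro h
    exact ⟨tmap (-a) x, h, by rw [tmap_tmap, neg_add_cancel, tmap_zero]⟩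

lemma tmap_cons {m : ℕ} (a p : ℝ) (y : Fin m → ℝ) :
    tmap a (Fin.cons p y) = Fin.cons (p + a) y := by
  funext j
  by_cases hj : j = 0
  · subst hj; simp [tmap]
  · obtain ⟨j', rfl⟩ := Fin.eq_succ_of_ne_zero hj
    simp [tmap_apply_ne a _ (Fin.succ_ne_zero j')]

lemma Cell1.nonempty {S : Set ℝ} (h : Cell1 S) : S.Nonempty := by
  obtain ⟨k, h | h⟩ := h
  · exact ⟨k, h ▸ rfl⟩
  · exact ⟨k + 1/2, by rw [h]; constructor <;> norm_num⟩

lemma not_int_mem_unit_Ioo {k : ℤ} {z : ℤ} (h : (z : ℝ) ∈ Ioo (k : ℝ) ((k : ℝ) + 1)) :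
    False := by
  obtain ⟨h1, h2⟩ := h
  have h1' : k < z := by exact_mod_cast h1
  have h2' : (z : ℝ) < ((k + 1 : ℤ) : ℝ) := by push_cast; linarith
  have h2'' : z < k + 1 := by exact_mod_cast h2'
  omega

lemma Cell1.eq_of_mem {A B : Set ℝ} (hA : Cell1 A) (hB : Cell1 B) {p : ℝ}
    (hpA : p ∈ A) (hpB : p ∈ B) : A = B := by
  obtain ⟨k, hk | hk⟩ := hA <;> obtain ⟨l, hl | hl⟩ := hB <;> subst hk <;> subst hl
  · rw [mem_singleton_iff] at hpA hpB; rw [hpA] at hpB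
    norm_cast at hpB ⊢; rw [hpB]
  · rw [mem_singleton_iff] at hpA; subst hpA
    exact absurd hpB not_int_mem_unit_Ioo
  · rw [mem_singleton_iff] at hpB; subst hpB
    exact absurd hpA not_int_mem_unit_Ioo
  · obtain ⟨h1, h2⟩ := hpA
    obtain ⟨h3, h4⟩ := hpB
    have hkl : k = l := by
      have c1 : (k : ℝ) < l + 1 := lt_trans h1 h4
      have c2 : (l : ℝ) < k + 1 := lt_trans h3 h2
      have c1' : (k : ℝ) < ((l + 1 : ℤ) : ℝ) := by push_cast; linarith
      have c2' : (l : ℝ) < ((k + 1 : ℤ) : ℝ) := by push_cast; linarith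
      have d1 : k < l + 1 := by exact_mod_cast c1'
      have d2 : l < k + 1 := by exact_mod_cast c2'
      omega
    rw [hkl]

lemma cell_fin_one {C : Set (Fin 1 → ℝ)} (hC : Cell C) :
    ∃ c0 : Set ℝ, Cell1 c0 ∧ C = {x | x 0 ∈ c0} := by
  obtain ⟨c, hc, rfl⟩ := hC
  refine ⟨c 0, hc 0, ?_⟩
  ext x
  simp only [mem_setOf_eq]
  constructor
  · intro h; exact h 0
  · intro h j
    have : j = 0 := Subsingleton.elim j 0
    rwa [this]

lemma Cell.nonempty {ℓ : ℕ} {C : Set (Fin ℓ → ℝ)} (hC : Cell C) : C.Nonempty := by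
  obtain ⟨c, hc, rfl⟩ := hC
  choose f hf using fun j => (hc j).nonempty
  exact ⟨f, hf⟩

end Aux


section Aux2

/-- `cSeq i` is a cell of `(0,n)` for `i < 2n-1`. -/
lemma cSeq_mem_cellsOf (n i : ℕ) (hi : i < 2 * n - 1) : cSeq i ∈ cellsOf (F1set n) := by
  by_cases hpar : i % 2 = 0
  · constructor
    · refine ⟨fun _ => Ioo ((i / 2 : ℕ) : ℝ) (((i / 2 : ℕ) : ℝ) + 1), fun _ => ⟨(i / 2 : ℕ), Or.inr (by push_cast; rfl)⟩, ?_⟩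
      rw [cSeq, if_pos hpar]
      ext x
      simp only [mem_setOf_eq]
      exact ⟨fun h j => by rwa [Subsingleton.elim j 0], fun h => h 0⟩
    · intro x hx
      rw [cSeq, if_pos hpar] at hx
      obtain ⟨h1, h2⟩ := hx
      constructor
      · have : (0:ℝ) ≤ ((i/2 : ℕ) : ℝ) := Nat.cast_nonneg _
        linarith
      · have : (i / 2 : ℕ) + 1 ≤ n := by omega
        have : ((i / 2 : ℕ) : ℝ) + 1 ≤ (n : ℝ) := by exact_mod_cast this
        linarith
  · have hpar' : i % 2 = 1 := by omega
    constructor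
    · refine ⟨fun _ => {(((i+1) / 2 : ℕ) : ℝ)}, fun _ => ⟨((i+1) / 2 : ℕ), Or.inl (by push_cast; rfl)⟩, ?_⟩
      rw [cSeq, if_neg hpar]
      ext x
      simp only [mem_setOf_eq, mem_singleton_iff]
      exact ⟨fun h j => by rwa [Subsingleton.elim j 0], fun h => h 0⟩
    · intro x hx
      rw [cSeq, if_neg hpar] at hx
      simp only [mem_setOf_eq] at hx
      rw [F1set, mem_setOf_eq, hx]
      constructor
      · have : 1 ≤ (i+1)/2 := by omega
        have : (1:ℝ) ≤ (((i+1)/2 : ℕ) : ℝ) := by exact_mod_cast this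
        linarith
      · have : (i+1)/2 < n := by omega
        exact_mod_cast this

/-- Every cell of `(0,n)` is some `cSeq i`, `i < 2n - 1`. -/
lemma cellsOf_F1set {n : ℕ} {C : Set (Fin 1 → ℝ)} (hC : C ∈ cellsOf (F1set n)) :
    ∃ i < 2 * n - 1, C = cSeq i := by
  obtain ⟨hcell, hsub⟩ := hC
  obtain ⟨c0, hc0, rfl⟩ := cell_fin_one hcell
  have hsub' : ∀ p ∈ c0, p ∈ Ioo (0:ℝ) (n:ℝ) := fun p hp =>
    hsub (show (fun _ : Fin 1 => p) ∈ {x : Fin 1 → ℝ | x 0 ∈ c0} from hp)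
  obtain ⟨k, hk | hk⟩ := hc0
  · subst hk
    have hk0 : (k:ℝ) ∈ Ioo (0:ℝ) (n:ℝ) := hsub' _ rfl
    have hk1 : 0 < k := by exact_mod_cast hk0.1
    have hk2 : k < n := by exact_mod_cast hk0.2
    refine ⟨2 * k.toNat - 1, by omega, ?_⟩
    rw [cSeq, if_neg (by omega)]
    have : ((2 * k.toNat - 1 + 1) / 2 : ℕ) = k.toNat := by omega
    rw [this]
    ext x
    simp only [mem_setOf_eq, mem_singleton_iff]
    constructor
    · intro h; rw [h]; norm_cast; omega
    · intro h; rw [h]; norm_cast; omega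
  · subst hk
    have hmid : (k:ℝ) + 1/2 ∈ Ioo (0:ℝ) (n:ℝ) := hsub' _ ⟨by linarith, by linarith⟩
    have hk1 : 0 ≤ k := by
      have := hmid.1
      have : (0:ℝ) < ((k+1:ℤ):ℝ) := by push_cast; linarith
      have : (0:ℤ) < k + 1 := by exact_mod_cast this
      omega
    have hk2 : k + 1 ≤ n := by
      have := hmid.2
      have : (k:ℝ) < (n:ℝ) := by linarith
      have : k < (n:ℤ) := by exact_mod_cast this
      omega
    refine ⟨2 * k.toNat, by omega, ?_⟩
    rw [cSeq, if_pos (by omega)]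
    have : ((2 * k.toNat) / 2 : ℕ) = k.toNat := by omega
    rw [this]
    have hcast : ((k.toNat : ℕ) : ℝ) = (k : ℝ) := by
      norm_cast; omega
    ext x
    simp only [mem_setOf_eq, hcast]

/-- Coverage of `(0,n)` by the cells `cSeq i`. -/
lemma cSeq_cover {n : ℕ} {p : ℝ} (hp : p ∈ Ioo (0:ℝ) (n:ℝ)) :
    ∃ i < 2 * n - 1, (fun _ : Fin 1 => p) ∈ cSeq i := by
  set k : ℤ := ⌊p⌋ with hk
  have hk0 : 0 ≤ k := Int.le_floor.mpr (by exact_mod_cast hp.1.le)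
  have hkp : (k:ℝ) ≤ p := Int.floor_le p
  have hpk : p < (k:ℝ) + 1 := Int.lt_floor_add_one p
  have hkn : k < n := by
    have : (k:ℝ) < n := lt_of_le_of_lt hkp hp.2
    exact_mod_cast this
  by_cases hpe : p = (k:ℝ)
  · have hk1 : 1 ≤ k := by
      rcases (lt_or_eq_of_le hk0) with h | h
      · omega
      · exfalso; rw [← h] at hpe; simp at hpe; rw [hpe] at hp; exact lt_irrefl _ hp.1
    refine ⟨2 * k.toNat - 1, by omega, ?_⟩
    rw [cSeq, if_neg (by omega)]
    simp only [mem_setOf_eq]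
    have : ((2 * k.toNat - 1 + 1) / 2 : ℕ) = k.toNat := by omega
    rw [this, hpe]
    norm_cast; omega
  · have hklt : (k:ℝ) < p := lt_of_le_of_ne hkp (Ne.symm hpe)
    refine ⟨2 * k.toNat, by omega, ?_⟩
    rw [cSeq, if_pos (by omega)]
    simp only [mem_setOf_eq]
    have h2 : ((2 * k.toNat) / 2 : ℕ) = k.toNat := by omega
    rw [h2]
    have hcast : ((k.toNat : ℕ) : ℝ) = (k : ℝ) := by norm_cast; omega
    rw [hcast]
    exact ⟨hklt, hpk⟩

end Aux2


section Aux3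

lemma fort_one_struct {X : Set (Fin 1 → ℝ)} (h : Fort 1 X) :
    ∃ n : ℕ, 0 < n ∧ X = F1set n := by
  have key : ∀ {ℓ : ℕ} {Y : Set (Fin ℓ → ℝ)}, Fort ℓ Y → ℓ = 1 →
      ∃ n : ℕ, 0 < n ∧ HEq Y (F1set n) := by
    intro ℓ Y h
    induction h with
    | base n hn => intro _; exact ⟨n, hn, HEq.rfl⟩
    | @step ℓ' F1 s hF1 hs ih1 ih2 =>
      intro hl
      exfalso
      obtain rfl : ℓ' = 0 := by omega
      obtain ⟨n', hn', hF1eq⟩ := ih1 rfl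
      have hF1eq' : F1 = F1set n' := eq_of_heq hF1eq
      have hcell := cSeq_mem_cellsOf n' 0 (by omega)
      rw [← hF1eq'] at hcell
      exact fort_zero_elim (hs (cSeq 0) hcell)
  obtain ⟨n, hn, he⟩ := key h rfl
  exact ⟨n, hn, eq_of_heq he⟩

lemma Fort.nonempty' {ℓ : ℕ} {X : Set (Fin ℓ → ℝ)} (h : Fort ℓ X) : X.Nonempty := by
  induction h with
  | base n hn =>
    refine ⟨fun _ => 1/2, ?_⟩
    simp only [mem_setOf_eq, mem_Ioo]
    constructor
    · norm_num
    · have : (1:ℝ) ≤ n := by exact_mod_cast hn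
      linarith
  | step F1 s hF1 hs ih1 ih2 =>
    obtain ⟨n', hn', hF1eq⟩ := fort_one_struct hF1
    subst hF1eq
    have hcell := cSeq_mem_cellsOf n' 0 (by omega)
    obtain ⟨y, hy⟩ := ih2 (cSeq 0) hcell
    refine ⟨Fin.cons (1/2) y, ?_⟩
    refine ⟨cSeq 0, hcell, ?_, ?_⟩
    · rw [cSeq, if_pos rfl]
      simp only [mem_setOf_eq, Fin.cons_zero]
      norm_num
    · rwa [Fin.tail_cons]

lemma fort_succ_struct {m : ℕ} (hm : 0 < m) {X : Set (Fin (m+1) → ℝ)}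
    (h : Fort (m+1) X) :
    ∃ (a : ℕ) (t : Set (Fin 1 → ℝ) → Set (Fin m → ℝ)), 0 < a ∧
      (∀ C ∈ cellsOf (F1set a), Fort m (t C)) ∧ X = ltimes a t := by
  cases h with
  | base n hn => omega
  | step F1 t hF1 ht =>
    obtain ⟨a, ha, rfl⟩ := fort_one_struct hF1
    exact ⟨a, t, ha, ht, rfl⟩

lemma Cell.tmap_image {m : ℕ} (k : ℤ) {C : Set (Fin (m+1) → ℝ)} (hC : Cell C) :
    Cell (tmap (k:ℝ) '' C) := by
  obtain ⟨c, hc, rfl⟩ := hC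
  refine ⟨fun j => if j = 0 then (fun p => p + (k:ℝ)) '' c 0 else c j, ?_, ?_⟩
  · intro j
    by_cases hj : j = 0
    · subst hj
      show Cell1 ((fun p => p + (k:ℝ)) '' c 0)
      obtain ⟨l, hl | hl⟩ := hc 0
      · refine ⟨l + k, Or.inl ?_⟩
        rw [hl, Set.image_singleton]
        push_cast
        rfl
      · refine ⟨l + k, Or.inr ?_⟩
        rw [hl, show (fun p => p + (k:ℝ)) = (· + (k:ℝ)) from rfl, image_add_const_Ioo]
        push_cast
        ring_nf
    · simp only [if_neg hj]; exact hc j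
  · ext x
    rw [tmap_mem_image]
    simp only [mem_setOf_eq]
    constructor
    · intro h j
      by_cases hj : j = 0
      · subst hj
        simp only [if_pos rfl]
        refine ⟨x 0 - k, ?_, by ring⟩
        have := h 0
        rwa [tmap_apply_zero] at this
      · simp only [if_neg hj]
        have := h j
        rwa [tmap_apply_ne _ _ hj] at this
    · intro h j
      by_cases hj : j = 0
      · subst hj
        rw [tmap_apply_zero]
        have := h 0
        simp only [if_pos rfl] at this
        obtain ⟨p, hp, hpx⟩ := this
        have hpx' : p + (k:ℝ) = x 0 := hpx
        have : x 0 + -(k:ℝ) = p := by linarith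
        rwa [this]
      · rw [tmap_apply_ne _ _ hj]
        have := h j
        simpa only [if_neg hj] using this

lemma Cell.cons_point {m : ℕ} (k : ℤ) {D : Set (Fin m → ℝ)} (hD : Cell D) :
    Cell {x : Fin (m+1) → ℝ | x 0 = (k:ℝ) ∧ Fin.tail x ∈ D} := by
  obtain ⟨d, hd, rfl⟩ := hD
  refine ⟨Fin.cons {(k:ℝ)} d, ?_, ?_⟩
  · intro j
    induction j using Fin.cases with
    | zero => rw [Fin.cons_zero]; exact ⟨k, Or.inl rfl⟩
    | succ j' => rw [Fin.cons_succ]; exact hd j'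
  · ext x
    simp only [mem_setOf_eq]
    constructor
    · rintro ⟨h0, ht⟩ j
      induction j using Fin.cases with
      | zero => rw [Fin.cons_zero]; exact h0
      | succ j' => rw [Fin.cons_succ]; exact ht j'
    · intro h
      constructor
      · have := h 0; rwa [Fin.cons_zero] at this
      · intro j'
        have := h j'.succ; rwa [Fin.cons_succ] at this

end Aux3


lemma Cell1.shift {B : Set ℝ} (hB : Cell1 B) (a : ℤ) : Cell1 {r : ℝ | r + (a:ℝ) ∈ B} := by
  obtain ⟨l, hl | hl⟩ := hB
  · refine ⟨l - a, Or.inl ?_⟩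
    ext r
    simp only [mem_setOf_eq, hl, mem_singleton_iff]
    constructor
    · intro h; push_cast; linarith
    · intro h; rw [h]; push_cast; ring
  · refine ⟨l - a, Or.inr ?_⟩
    ext r
    simp only [mem_setOf_eq, hl, mem_Ioo]
    constructor
    · rintro ⟨h1, h2⟩; constructor <;> [push_cast; push_cast] <;> linarith
    · rintro ⟨h1, h2⟩
      constructor
      · have : ((l - a : ℤ) : ℝ) < r := h1
        push_cast at this; linarith
      · have : r < ((l - a : ℤ) : ℝ) + 1 := h2
        push_cast at this; linarith

lemma continuous_tail {m : ℕ} : Continuous (Fin.tail : (Fin (m+1) → ℝ) → Fin m → ℝ) :=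
  continuous_pi fun j => continuous_apply j.succ

set_option maxHeartbeats 1600000 in
/-- The tower construction: given, for each of the `2n - 1` integer cells `𝒞ᵢ` of
`ℱ¹ = (0, n)`, a morphism `φᵢ : ℱᵢ → b(𝒞ᵢ) × s(𝒞ᵢ)` (a morphism `ℱᵢ → (0,1) ⋉ s(𝒞ᵢ)` for
interval cells; for point cells, `ℱᵢ = {0} × 𝒦ᵢ` and `φᵢ = id × ψᵢ` for a morphism
`ψᵢ : 𝒦ᵢ → s(𝒞ᵢ)`), the union `ℱ = ⋃ᵢ t_{m₀+⋯+m_{i-1}}(ℱᵢ)` is a fort, and the map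
equal on `t_{m₀+⋯+m_{i-1}}(ℱᵢ)` to `t_{−(m₀+⋯+m_{i-1})}` followed by `φᵢ` followed by the
translation carrying `b(𝒞ᵢ)` onto `𝒞ᵢ` is a morphism `ℱ → ℱ¹ ⋉ s`. -/
theorem tower_construction (m n : ℕ) (hn : 0 < n)
    (s : Set (Fin 1 → ℝ) → Set (Fin m → ℝ))
    (hs : ∀ C ∈ cellsOf (F1set n), Fort m (s C))
    (F : ℕ → Set (Fin (m + 1) → ℝ)) (φ : ℕ → (Fin (m + 1) → ℝ) → (Fin (m + 1) → ℝ))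
    (K : ℕ → Set (Fin m → ℝ)) (ψ : ℕ → (Fin m → ℝ) → (Fin m → ℝ))
    (heven : ∀ i < 2 * n - 1, i % 2 = 0 → Fort (m + 1) (F i) ∧
      Morphism (F i)
        {x : Fin (m + 1) → ℝ | x 0 ∈ Set.Ioo (0 : ℝ) 1 ∧ Fin.tail x ∈ s (cSeq i)} (φ i))
    (hodd : ∀ i < 2 * n - 1, i % 2 = 1 → Fort m (K i) ∧ Morphism (K i) (s (cSeq i)) (ψ i) ∧
      F i = {x : Fin (m + 1) → ℝ | x 0 = 0 ∧ Fin.tail x ∈ K i} ∧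
      ∀ x : Fin (m + 1) → ℝ, φ i x = Fin.cons 0 (ψ i (Fin.tail x))) :
    Fort (m + 1) (⋃ i ∈ Finset.range (2 * n - 1), tmap (offsets F i) '' F i) ∧
    ∀ Φ : (Fin (m + 1) → ℝ) → (Fin (m + 1) → ℝ),
      (∀ i < 2 * n - 1, ∀ x ∈ F i, Φ (tmap (offsets F i) x) = tmap (tgtShift i) (φ i x)) →
      Morphism (⋃ i ∈ Finset.range (2 * n - 1), tmap (offsets F i) '' F i)
        (ltimes n s) Φ := by
  classical
  rcases Nat.eq_zero_or_pos m with hm0 | hm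
  · subst hm0
    exact absurd (hs (cSeq 0) (cSeq_mem_cellsOf n 0 (by omega))) (fun h => fort_zero_elim h)
  -- structure of even pieces
  have hstruct : ∀ i, ∃ (a : ℕ) (t : Set (Fin 1 → ℝ) → Set (Fin m → ℝ)),
      i < 2*n-1 → i % 2 = 0 →
        (0 < a ∧ (∀ C ∈ cellsOf (F1set a), Fort m (t C)) ∧ F i = ltimes a t) := by
    intro i
    by_cases h : i < 2*n-1 ∧ i % 2 = 0
    · obtain ⟨a, t, ha, ht, hFi⟩ := fort_succ_struct hm (heven i h.1 h.2).1
      exact ⟨a, t, fun _ _ => ⟨ha, ht, hFi⟩⟩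
    · exact ⟨1, fun _ => ∅, fun h1 h2 => absurd ⟨h1, h2⟩ h⟩
  choose nn ss hss using hstruct
  have hnn : ∀ i < 2*n-1, i % 2 = 0 → 0 < nn i := fun i h1 h2 => (hss i h1 h2).1
  have hssF : ∀ i < 2*n-1, i % 2 = 0 → ∀ C ∈ cellsOf (F1set (nn i)), Fort m (ss i C) :=
    fun i h1 h2 => (hss i h1 h2).2.1
  have hFeven : ∀ i < 2*n-1, i % 2 = 0 → F i = ltimes (nn i) (ss i) :=
    fun i h1 h2 => (hss i h1 h2).2.2
  have hFodd : ∀ i < 2*n-1, i % 2 = 1 →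
      F i = {x : Fin (m+1) → ℝ | x 0 = 0 ∧ Fin.tail x ∈ K i} :=
    fun i h1 h2 => (hodd i h1 h2).2.2.1
  have hφodd : ∀ i < 2*n-1, i % 2 = 1 → ∀ x, φ i x = Fin.cons 0 (ψ i (Fin.tail x)) :=
    fun i h1 h2 => (hodd i h1 h2).2.2.2
  -- offsets
  set Nf : ℕ → ℕ := fun j => if j % 2 = 0 then nn j else 0 with hNf
  set Onat : ℕ → ℕ := fun i => ∑ j ∈ Finset.range i, Nf j with hOnat
  have hNfeven : ∀ j, j % 2 = 0 → Nf j = nn j := by intro j h; simp [hNf, h]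
  have hNfodd : ∀ j, j % 2 = 1 → Nf j = 0 := by intro j h; simp [hNf, h]
  have hOnat_succ : ∀ i, Onat (i+1) = Onat i + Nf i := fun i => Finset.sum_range_succ Nf i
  have hOnat_mono : ∀ i j, i ≤ j → Onat i ≤ Onat j := fun i j hij =>
    Finset.sum_le_sum_of_subset (Finset.range_subset_range.mpr hij)
  have hOnat_zero : Onat 0 = 0 := Finset.sum_range_zero Nf
  have hFevenMem : ∀ i < 2*n-1, i % 2 = 0 → ∀ z : Fin (m+1) → ℝ,
      (z ∈ F i ↔ ∃ C ∈ cellsOf (F1set (nn i)), (fun _ : Fin 1 => z 0) ∈ C ∧ Fin.tail z ∈ ss i C) := by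
    intro i h1 h2 z
    rw [hFeven i h1 h2]
    rfl
  have hF0range : ∀ i < 2*n-1, ∀ z ∈ F i,
      (i % 2 = 0 → z 0 ∈ Ioo (0:ℝ) (nn i : ℝ)) ∧ (i % 2 = 1 → z 0 = 0) := by
    intro i h1 z hz
    constructor
    · intro h2
      obtain ⟨C, hC, hz0, -⟩ := (hFevenMem i h1 h2 z).mp hz
      exact hC.2 hz0
    · intro h2
      rw [hFodd i h1 h2] at hz
      exact hz.1
  have hsup : ∀ j < 2*n-1, sSup ((fun x : Fin (m+1) → ℝ => x 0) '' F j) = (Nf j : ℝ) := by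
    intro j hj
    rcases Nat.mod_two_eq_zero_or_one j with h2 | h2
    · have himg : (fun x : Fin (m+1) → ℝ => x 0) '' F j = Ioo (0:ℝ) (nn j : ℝ) := by
        ext p
        constructor
        · rintro ⟨z, hz, rfl⟩
          exact (hF0range j hj z hz).1 h2
        · intro hp
          obtain ⟨i', hi', hmem⟩ := cSeq_cover hp
          have hcell := cSeq_mem_cellsOf (nn j) i' hi'
          obtain ⟨y, hy⟩ := (hssF j hj h2 (cSeq i') hcell).nonempty'
          refine ⟨Fin.cons p y, ?_, Fin.cons_zero _ _⟩
          rw [hFevenMem j hj h2]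
          refine ⟨cSeq i', hcell, ?_, ?_⟩
          · have he : (fun _ : Fin 1 => (Fin.cons p y : Fin (m+1) → ℝ) 0) = (fun _ : Fin 1 => p) := by
              funext _; exact Fin.cons_zero _ _
            rw [he]; exact hmem
          · rw [Fin.tail_cons]; exact hy
      rw [himg, hNfeven j h2]
      exact csSup_Ioo (by exact_mod_cast hnn j hj h2)
    · have himg : (fun x : Fin (m+1) → ℝ => x 0) '' F j = {(0:ℝ)} := by
        ext p
        constructor
        · rintro ⟨z, hz, rfl⟩
          rw [mem_singleton_iff]
          exact (hF0range j hj z hz).2 h2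
        · intro hp
          rw [mem_singleton_iff] at hp
          subst hp
          obtain ⟨y, hy⟩ := (hodd j hj h2).1.nonempty'
          refine ⟨Fin.cons 0 y, ?_, Fin.cons_zero _ _⟩
          rw [hFodd j hj h2]
          exact ⟨Fin.cons_zero _ _, by rw [Fin.tail_cons]; exact hy⟩
      rw [himg, hNfodd j h2, csSup_singleton]
      norm_num
  have hoff : ∀ i ≤ 2*n-1, offsets F i = (Onat i : ℝ) := by
    intro i hi
    rw [offsets]
    have : (Onat i : ℝ) = ∑ j ∈ Finset.range i, (Nf j : ℝ) := by
      rw [hOnat]; push_cast; rfl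
    rw [this]
    apply Finset.sum_congr rfl
    intro j hj
    rw [Finset.mem_range] at hj
    exact hsup j (by omega)
  -- pieces
  set P : ℕ → Set (Fin (m+1) → ℝ) := fun i => tmap ((Onat i : ℕ) : ℝ) '' F i with hP
  have hPmem : ∀ i (x : Fin (m+1) → ℝ), x ∈ P i ↔ tmap (-(Onat i : ℝ)) x ∈ F i := by
    intro i x
    rw [hP]
    exact tmap_mem_image _ _ _
  have hUrw : (⋃ i ∈ Finset.range (2*n-1), tmap (offsets F i) '' F i)
      = ⋃ i ∈ Finset.range (2*n-1), P i := by
    ext x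
    simp only [Set.mem_iUnion, Finset.mem_range]
    constructor
    · rintro ⟨i, hi, hx⟩
      refine ⟨i, hi, ?_⟩
      rw [hP]
      rwa [hoff i (le_of_lt hi)] at hx
    · rintro ⟨i, hi, hx⟩
      refine ⟨i, hi, ?_⟩
      rw [hoff i (le_of_lt hi)]
      rwa [hP] at hx
  have hUmem : ∀ x : Fin (m+1) → ℝ,
      (x ∈ ⋃ i ∈ Finset.range (2*n-1), P i) ↔ ∃ i < 2*n-1, x ∈ P i := by
    intro x
    simp only [Set.mem_iUnion, Finset.mem_range]
    tauto
  -- ranges of pieces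
  set Rmem : ℕ → ℝ → Prop := fun i p =>
    (i % 2 = 0 ∧ (Onat i : ℝ) < p ∧ p < (Onat i : ℝ) + (nn i : ℝ)) ∨
    (i % 2 = 1 ∧ p = (Onat i : ℝ)) with hRmem
  have hrange : ∀ i < 2*n-1, ∀ x ∈ P i, Rmem i (x 0) := by
    intro i hi x hx
    rw [hPmem] at hx
    have hr := hF0range i hi _ hx
    have h0 : (tmap (-(Onat i:ℝ)) x) 0 = x 0 - (Onat i : ℝ) := by
      rw [tmap_apply_zero]; ring
    rcases Nat.mod_two_eq_zero_or_one i with h2 | h2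
    · have := hr.1 h2
      rw [h0] at this
      exact Or.inl ⟨h2, by linarith [this.1], by linarith [this.2]⟩
    · have := hr.2 h2
      rw [h0] at this
      exact Or.inr ⟨h2, by linarith⟩
  have hOmr : ∀ i j, i ≤ j → (Onat i : ℝ) ≤ (Onat j : ℝ) := fun i j h => by
    exact_mod_cast hOnat_mono i j h
  have hOsucc_even : ∀ i, i % 2 = 0 → (Onat (i+1) : ℝ) = (Onat i : ℝ) + (nn i : ℝ) := by
    intro i h2
    rw [hOnat_succ i, hNfeven i h2]
    push_cast; ring
  have hOsucc_odd : ∀ i, i % 2 = 1 → Onat (i+1) = Onat i := by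
    intro i h2
    rw [hOnat_succ i, hNfodd i h2]
    omega
  have hlt' : ∀ i j, i < 2*n-1 → j < 2*n-1 → i < j → ∀ p q, Rmem i p → Rmem j q → p < q := by
    intro i j hi hj hij p q hp hq
    have hqlow : (Onat j : ℝ) ≤ q := by
      rcases hq with ⟨-, h, -⟩ | ⟨-, h⟩
      · linarith
      · linarith [h.ge]
    rcases hp with ⟨h2, hp1, hp2⟩ | ⟨h2, hp2⟩
    · have he := hOsucc_even i h2
      have hle := hOmr (i+1) j (by omega)
      linarith
    · rcases hq with ⟨h2', hq1, -⟩ | ⟨h2', hq2⟩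
      · have he : (Onat (i+1) : ℝ) = (Onat i : ℝ) := by rw [hOsucc_odd i h2]
        have hle := hOmr (i+1) j (by omega)
        linarith
      · have hij2 : i + 2 ≤ j := by omega
        have he : (i+1) % 2 = 0 := by omega
        have hi1 : i + 1 < 2*n-1 := by omega
        have h1 : Onat (i+2) = Onat (i+1) + nn (i+1) := by
          rw [show i+2 = (i+1)+1 from rfl, hOnat_succ (i+1), hNfeven (i+1) he]
        have h1' : Onat (i+1) = Onat i := hOsucc_odd i h2
        have h3 : 0 < nn (i+1) := hnn (i+1) hi1 he
        have hle := hOnat_mono (i+2) j hij2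
        have h4 : Onat i < Onat j := by omega
        have h5 : (Onat i : ℝ) < (Onat j : ℝ) := by exact_mod_cast h4
        linarith
  have hRuniq : ∀ i j, i < 2*n-1 → j < 2*n-1 → ∀ p, Rmem i p → Rmem j p → i = j := by
    intro i j hi hj p h1 h2
    by_contra hne
    rcases Nat.lt_or_ge i j with h | h
    · exact lt_irrefl p (hlt' i j hi hj h p p h1 h2)
    · exact lt_irrefl p (hlt' j i hj hi (by omega) p p h2 h1)
  have hsame : ∀ i j, i < 2*n-1 → j < 2*n-1 → ∀ x y : Fin (m+1) → ℝ,
      x ∈ P i → y ∈ P j → x 0 = y 0 → i = j := by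
    intro i j hi hj x y hx hy hxy
    exact hRuniq i j hi hj (x 0) (hrange i hi x hx) (by rw [hxy]; exact hrange j hj y hy)
  have hsep : ∀ i j, i < 2*n-1 → j < 2*n-1 → i < j → ∀ p q, Rmem i p → Rmem j q →
      ∃ z : ℕ, p ≤ (z:ℝ) ∧ (z:ℝ) ≤ q := by
    intro i j hi hj hij p q hp hq
    have hqlow : (Onat j : ℝ) ≤ q := by
      rcases hq with ⟨-, h, -⟩ | ⟨-, h⟩
      · linarith
      · linarith [h.ge]
    rcases hp with ⟨h2, hp1, hp2⟩ | ⟨h2, hp2⟩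
    · refine ⟨Onat (i+1), ?_, ?_⟩
      · have he := hOsucc_even i h2
        linarith
      · exact le_trans (hOmr (i+1) j (by omega)) hqlow
    · exact ⟨Onat i, le_of_eq hp2, by
        linarith [hlt' i j hi hj hij p q (Or.inr ⟨h2, hp2⟩) hq]⟩
  have hcover : ∀ p : ℝ, 0 < p → p < (Onat (2*n-1) : ℝ) → ∃ i < 2*n-1, Rmem i p := by
    have key : ∀ k, 2*k+1 ≤ 2*n-1 → ∀ p : ℝ, 0 < p → p < (Onat (2*k+1) : ℝ) →
        ∃ i < 2*k+1, Rmem i p := by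
      intro k
      induction k with
      | zero =>
        intro hk p hp0 hp1
        refine ⟨0, by omega, Or.inl ⟨rfl, ?_, ?_⟩⟩
        · rw [hOnat_zero]; exact_mod_cast hp0
        · have h1 : (Onat 1 : ℝ) = (Onat 0 : ℝ) + (nn 0 : ℝ) := hOsucc_even 0 rfl
          have h0 : (Onat 0 : ℝ) = 0 := by rw [hOnat_zero]; norm_num
          rw [hOnat_zero]
          push_cast
          rw [show (2*0+1 : ℕ) = 1 from rfl] at hp1
          linarith
      | succ k ih =>
        intro hk p hp0 hp1
        have hidx : 2*(k+1)+1 = 2*k+3 := by omega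
        rw [hidx] at hp1
        have ho : Onat (2*k+2) = Onat (2*k+1) := hOsucc_odd (2*k+1) (by omega)
        have he : (Onat (2*k+3) : ℝ) = (Onat (2*k+2) : ℝ) + (nn (2*k+2) : ℝ) := by
          rw [show 2*k+3 = (2*k+2)+1 from rfl]
          exact hOsucc_even (2*k+2) (by omega)
        rcases lt_trichotomy p ((Onat (2*k+1) : ℝ)) with h | h | h
        · obtain ⟨i, hi, hR⟩ := ih (by omega) p hp0 h
          exact ⟨i, by omega, hR⟩
        · exact ⟨2*k+1, by omega, Or.inr ⟨by omega, h⟩⟩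
        · refine ⟨2*k+2, by omega, Or.inl ⟨by omega, ?_, ?_⟩⟩
          · rw [ho]; exact h
          · rw [show ((Onat (2*k+2)):ℝ) + (nn (2*k+2) : ℝ) = ((Onat (2*k+3)):ℝ) from he.symm]
            exact hp1
    intro p hp0 hp1
    have h2n : 2*(n-1)+1 = 2*n-1 := by omega
    obtain ⟨i, hi, h⟩ := key (n-1) (by omega) p hp0 (by rw [h2n]; exact hp1)
    exact ⟨i, by omega, h⟩
  have hRIoo : ∀ i < 2*n-1, ∀ p, Rmem i p → p ∈ Ioo (0:ℝ) ((Onat (2*n-1)) : ℝ) := by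
    intro i hi p hp
    rcases hp with ⟨h2, hp1, hp2⟩ | ⟨h2, hp2⟩
    · constructor
      · have : (0:ℝ) ≤ (Onat i : ℝ) := Nat.cast_nonneg _
        linarith
      · have he := hOsucc_even i h2
        have := hOmr (i+1) (2*n-1) (by omega)
        linarith
    · constructor
      · have h1 : 0 < Onat 1 := by
          rw [hOnat_succ 0, hNfeven 0 rfl, hOnat_zero]
          simpa using hnn 0 (by omega) rfl
        have h2' : Onat 1 ≤ Onat i := hOnat_mono 1 i (by omega)
        have : (0:ℝ) < (Onat i : ℝ) := by exact_mod_cast lt_of_lt_of_le h1 h2'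
        linarith
      · have hi2 : i + 2 ≤ 2*n-1 := by omega
        have he : (i+1) % 2 = 0 := by omega
        have hi1 : i + 1 < 2*n-1 := by omega
        have h1 : Onat (i+2) = Onat (i+1) + nn (i+1) := by
          rw [show i+2 = (i+1)+1 from rfl, hOnat_succ (i+1), hNfeven (i+1) he]
        have h1' : Onat (i+1) = Onat i := hOsucc_odd i h2
        have h3 : 0 < nn (i+1) := hnn (i+1) hi1 he
        have hle := hOnat_mono (i+2) (2*n-1) hi2
        have h4 : Onat i < Onat (2*n-1) := by omega
        have h5 : (Onat i : ℝ) < (Onat (2*n-1) : ℝ) := by exact_mod_cast h4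
        linarith
  -- fibers of the union over cells
  have key : ∀ i < 2*n-1, ∀ B : Set ℝ, Cell1 B → (∀ r ∈ B, Rmem i r) →
      ∃ G : Set (Fin m → ℝ), Fort m G ∧ ∀ p ∈ B, ∀ y : Fin m → ℝ,
        (Fin.cons p y ∈ ⋃ i ∈ Finset.range (2*n-1), P i ↔ y ∈ G) := by
    intro i hi B hBcell hB
    rcases Nat.mod_two_eq_zero_or_one i with h2 | h2
    · -- even piece
      set B' : Set ℝ := {r : ℝ | r + (Onat i : ℝ) ∈ B} with hB'
      have hB'cell : Cell1 B' := hBcell.shift (Onat i : ℤ)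
      set CB : Set (Fin 1 → ℝ) := {x : Fin 1 → ℝ | x 0 ∈ B'} with hCB
      have hCBcell : CB ∈ cellsOf (F1set (nn i)) := by
        constructor
        · refine ⟨fun _ => B', fun _ => hB'cell, ?_⟩
          ext x
          simp only [mem_setOf_eq]
          exact ⟨fun h j => by rwa [Subsingleton.elim j 0], fun h => h 0⟩
        · intro x hx
          have := hB _ hx
          rcases this with ⟨-, hr1, hr2⟩ | ⟨hodd', -⟩
          · exact ⟨by linarith, by linarith⟩
          · omega
      refine ⟨ss i CB, hssF i hi h2 CB hCBcell, ?_⟩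
      intro p hp y
      have hRp : Rmem i p := hB p hp
      constructor
      · intro hU
        obtain ⟨j, hj, hPj⟩ := (hUmem _).mp hU
        have hj' : j = i := by
          apply hRuniq j i hj hi (p)
          · have := hrange j hj _ hPj
            rwa [Fin.cons_zero] at this
          · exact hRp
        subst hj'
        rw [hPmem] at hPj
        rw [tmap_cons] at hPj
        rw [hFevenMem j hj h2] at hPj
        obtain ⟨C', hC', hmem, htail⟩ := hPj
        rw [Fin.cons_zero] at hmem
        rw [Fin.tail_cons] at htail
        obtain ⟨c0', hc0', hC'eq⟩ := cell_fin_one hC'.1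
        have hmem' : p + -(Onat j : ℝ) ∈ c0' := by
          rw [hC'eq] at hmem; exact hmem
        have hmemB' : p + -(Onat j : ℝ) ∈ B' := by
          show p + -(Onat j:ℝ) + (Onat j:ℝ) ∈ B
          rwa [show p + -(Onat j:ℝ) + (Onat j:ℝ) = p by ring]
        have hceq : c0' = B' := hc0'.eq_of_mem hB'cell hmem' hmemB'
        have hCeq : C' = CB := by rw [hC'eq, hceq]
        rwa [hCeq] at htail
      · intro hG
        rw [hUmem]
        refine ⟨i, hi, ?_⟩
        rw [hPmem, tmap_cons, hFevenMem i hi h2]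
        refine ⟨CB, hCBcell, ?_, ?_⟩
        · rw [Fin.cons_zero]
          show p + -(Onat i:ℝ) + (Onat i:ℝ) ∈ B
          rwa [show p + -(Onat i:ℝ) + (Onat i:ℝ) = p by ring]
        · rwa [Fin.tail_cons]
    · -- odd piece
      refine ⟨K i, (hodd i hi h2).1, ?_⟩
      intro p hp y
      have hRp : Rmem i p := hB p hp
      have hpO : p = (Onat i : ℝ) := by
        rcases hRp with ⟨he, -⟩ | ⟨-, h⟩
        · omega
        · exact h
      constructor
      · intro hU
        obtain ⟨j, hj, hPj⟩ := (hUmem _).mp hU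
        have hj' : j = i := by
          apply hRuniq j i hj hi p
          · have := hrange j hj _ hPj
            rwa [Fin.cons_zero] at this
          · exact hRp
        subst hj'
        rw [hPmem, tmap_cons, hFodd j hj h2] at hPj
        have := hPj.2
        rwa [Fin.tail_cons] at this
      · intro hG
        rw [hUmem]
        refine ⟨i, hi, ?_⟩
        rw [hPmem, tmap_cons, hFodd i hi h2]
        constructor
        · rw [Fin.cons_zero, hpO]; ring
        · rwa [Fin.tail_cons]
  have hfibcore : ∀ C ∈ cellsOf (F1set (Onat (2*n-1))), ∃ G : Set (Fin m → ℝ),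
      Fort m G ∧ ∀ p : ℝ, (fun _ : Fin 1 => p) ∈ C →
        ∀ y : Fin m → ℝ, (Fin.cons p y ∈ ⋃ i ∈ Finset.range (2*n-1), P i ↔ y ∈ G) := by
    intro C hC
    obtain ⟨c0, hc0, hCeq⟩ := cell_fin_one hC.1
    have hc0sub : ∀ p ∈ c0, p ∈ Ioo (0:ℝ) ((Onat (2*n-1)):ℝ) := by
      intro p hp
      exact hC.2 (show (fun _ : Fin 1 => p) ∈ C by rw [hCeq]; exact hp)
    -- find the piece index for c0
    have hpick : ∃ i < 2*n-1, ∀ r ∈ c0, Rmem i r := by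
      obtain ⟨l, hl | hl⟩ := hc0
      · subst hl
        have hk := hc0sub _ rfl
        obtain ⟨i, hi, hR⟩ := hcover _ hk.1 hk.2
        refine ⟨i, hi, ?_⟩
        intro r hr
        rw [mem_singleton_iff] at hr
        rwa [hr]
      · subst hl
        have hmid : (l:ℝ) + 1/2 ∈ Ioo (0:ℝ) ((Onat (2*n-1)):ℝ) :=
          hc0sub _ ⟨by linarith, by linarith⟩
        obtain ⟨i, hi, hR⟩ := hcover _ hmid.1 hmid.2
        refine ⟨i, hi, ?_⟩
        rcases hR with ⟨h2, hr1, hr2⟩ | ⟨h2, hr⟩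
        · -- even: Onat i ≤ l and l + 1 ≤ Onat i + nn i
          have hOl : (Onat i : ℝ) ≤ (l:ℝ) := by
            by_contra hcon
            push_neg at hcon
            have c1 : ((l:ℤ):ℝ) < ((Onat i : ℕ):ℝ) := by exact_mod_cast hcon
            have c2 : ((Onat i:ℕ):ℤ) < l + 1 := by
              have : ((Onat i : ℕ):ℝ) < ((l+1 : ℤ):ℝ) := by push_cast; linarith
              exact_mod_cast this
            have c3 : (l:ℤ) < ((Onat i:ℕ):ℤ) := by exact_mod_cast c1
            omega
          have hl1 : (l:ℝ) + 1 ≤ (Onat i : ℝ) + (nn i : ℝ) := by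
            by_contra hcon
            push_neg at hcon
            have c2 : ((Onat i + nn i : ℕ):ℤ) < l + 1 := by
              have : ((Onat i + nn i : ℕ):ℝ) < ((l+1:ℤ):ℝ) := by push_cast; linarith
              exact_mod_cast this
            have c3 : (l:ℤ) < ((Onat i + nn i : ℕ):ℤ) := by
              have : ((l:ℤ):ℝ) < ((Onat i + nn i : ℕ):ℝ) := by push_cast; linarith
              exact_mod_cast this
            omega
          intro r hr
          exact Or.inl ⟨h2, by linarith [hr.1], by linarith [hr.2]⟩
        · -- odd: impossible, Onat i = l + 1/2
          exfalso
          have : ((2*l+1 : ℤ):ℝ) = ((2*Onat i : ℕ):ℝ) := by push_cast; linarith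
          have h2l : (2*l+1 : ℤ) = (2*Onat i : ℕ) := by exact_mod_cast this
          omega
    obtain ⟨i, hi, hall⟩ := hpick
    obtain ⟨G, hG1, hG2⟩ := key i hi c0 hc0 hall
    refine ⟨G, hG1, ?_⟩
    intro p hp y
    rw [hCeq] at hp
    exact hG2 p hp y
  choose Gfun hGfort hGfib using hfibcore
  set s' : Set (Fin 1 → ℝ) → Set (Fin m → ℝ) := fun C =>
    if h : C ∈ cellsOf (F1set (Onat (2*n-1))) then Gfun C h else ∅ with hs'
  have hs'eq : ∀ C (h : C ∈ cellsOf (F1set (Onat (2*n-1)))), s' C = Gfun C h := by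
    intro C h
    rw [hs']
    exact dif_pos h
  have hNtotpos : 0 < Onat (2*n-1) := by
    have h0 : 0 < nn 0 := hnn 0 (by omega) rfl
    have h1 : Onat 1 = nn 0 := by
      rw [hOnat_succ 0, hNfeven 0 rfl, hOnat_zero]; omega
    have h2 : Onat 1 ≤ Onat (2*n-1) := hOnat_mono 1 (2*n-1) (by omega)
    omega
  have hUeq : (⋃ i ∈ Finset.range (2*n-1), P i)
      = {x : Fin (m+1) → ℝ | ∃ C ∈ cellsOf (F1set (Onat (2*n-1))),
          (fun _ : Fin 1 => x 0) ∈ C ∧ Fin.tail x ∈ s' C} := by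
    ext x
    constructor
    · intro hx
      obtain ⟨i, hi, hPi⟩ := (hUmem x).mp hx
      have hx0 : x 0 ∈ Ioo (0:ℝ) ((Onat (2*n-1)):ℝ) :=
        hRIoo i hi (x 0) (hrange i hi x hPi)
      obtain ⟨i', hi', hmem⟩ := cSeq_cover hx0
      have hcell := cSeq_mem_cellsOf (Onat (2*n-1)) i' hi'
      refine ⟨cSeq i', hcell, hmem, ?_⟩
      rw [hs'eq _ hcell]
      apply (hGfib (cSeq i') hcell (x 0) hmem (Fin.tail x)).mp
      rwa [Fin.cons_self_tail]
    · rintro ⟨C, hC, hx0, htail⟩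
      rw [hs'eq _ hC] at htail
      have := (hGfib C hC (x 0) hx0 (Fin.tail x)).mpr htail
      rwa [Fin.cons_self_tail] at this
  constructor
  · rw [hUrw, hUeq]
    refine Fort.step (F1set (Onat (2*n-1))) s' (Fort.base (Onat (2*n-1)) hNtotpos) ?_
    intro C hC
    rw [hs'eq _ hC]
    exact hGfort C hC
  · intro Φ hΦ
    have hΦP : ∀ i < 2*n-1, ∀ x ∈ P i,
        Φ x = tmap (tgtShift i) (φ i (tmap (-(Onat i:ℝ)) x)) := by
      intro i hi x hx
      have hx' := (hPmem i x).mp hx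
      have := hΦ i hi _ hx'
      rwa [hoff i (le_of_lt hi), tmap_tmap, neg_add_cancel, tmap_zero] at this
    have htgt_even : ∀ i : ℕ, i % 2 = 0 → tgtShift i = ((i/2 : ℕ) : ℝ) := by
      intro i h2; rw [tgtShift, if_pos h2]
    have htgt_odd : ∀ i : ℕ, i % 2 = 1 → tgtShift i = (((i+1)/2 : ℕ) : ℝ) := by
      intro i h2; rw [tgtShift, if_neg (by omega)]
    have himgP : ∀ i < 2*n-1, Φ '' P i
        = {x : Fin (m+1) → ℝ | (fun _ : Fin 1 => x 0) ∈ cSeq i ∧ Fin.tail x ∈ s (cSeq i)} := by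
      intro i hi
      have h1 : Φ '' P i = (fun z => tmap (tgtShift i) (φ i z)) '' F i := by
        rw [hP, ← Set.image_comp]
        apply Set.image_congr
        intro z hz
        have := hΦ i hi z hz
        rw [hoff i (le_of_lt hi)] at this
        exact this
      rw [h1]
      have h2' : (fun z => tmap (tgtShift i) (φ i z)) '' F i
          = tmap (tgtShift i) '' (φ i '' F i) := by
        rw [Set.image_image]
      rw [h2']
      rcases Nat.mod_two_eq_zero_or_one i with h2 | h2
      · rw [(heven i hi h2).2.1]
        ext x
        rw [tmap_mem_image]
        simp only [mem_setOf_eq, tmap_apply_zero, tmap_tail, mem_Ioo]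
        rw [cSeq, if_pos h2, htgt_even i h2]
        simp only [mem_setOf_eq, mem_Ioo]
        constructor
        · rintro ⟨⟨ha, hb⟩, hc⟩
          exact ⟨⟨by linarith, by linarith⟩, hc⟩
        · rintro ⟨⟨ha, hb⟩, hc⟩
          exact ⟨⟨by linarith, by linarith⟩, hc⟩
      · have himodd : φ i '' F i = {x : Fin (m+1) → ℝ | x 0 = 0 ∧ Fin.tail x ∈ s (cSeq i)} := by
          ext z
          constructor
          · rintro ⟨x, hx, rfl⟩
            rw [hφodd i hi h2 x]
            constructor
            · exact Fin.cons_zero _ _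
            · rw [Fin.tail_cons]
              rw [hFodd i hi h2] at hx
              rw [← (hodd i hi h2).2.1.1]
              exact mem_image_of_mem _ hx.2
          · rintro ⟨hz0, hzt⟩
            rw [← (hodd i hi h2).2.1.1] at hzt
            obtain ⟨y, hy, hyz⟩ := hzt
            refine ⟨Fin.cons 0 y, ?_, ?_⟩
            · rw [hFodd i hi h2]
              exact ⟨Fin.cons_zero _ _, by rw [Fin.tail_cons]; exact hy⟩
            · rw [hφodd i hi h2, Fin.tail_cons, hyz]
              rw [← hz0]
              exact (Fin.cons_self_tail z)
        rw [himodd]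
        ext x
        rw [tmap_mem_image]
        simp only [mem_setOf_eq, tmap_apply_zero, tmap_tail]
        rw [cSeq, if_neg (by omega), htgt_odd i h2]
        simp only [mem_setOf_eq]
        constructor
        · rintro ⟨ha, hb⟩
          exact ⟨by linarith, hb⟩
        · rintro ⟨ha, hb⟩
          exact ⟨by linarith, hb⟩
    have hpre : ∀ i < 2*n-1, Precellular (F i) (φ i) := by
      intro i hi
      rcases Nat.mod_two_eq_zero_or_one i with h2 | h2
      · exact (heven i hi h2).2.2.1
      · obtain ⟨hKfort, hψmor, hFi, hφi⟩ := hodd i hi h2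
        obtain ⟨hψdep, hψmono⟩ := hψmor.2.1
        constructor
        · intro k x hx y hy hagree
          rw [hφi x, hφi y]
          by_cases hk : k = 0
          · subst hk; rw [Fin.cons_zero, Fin.cons_zero]
          · obtain ⟨k', rfl⟩ := Fin.eq_succ_of_ne_zero hk
            rw [Fin.cons_succ, Fin.cons_succ]
            rw [hFi] at hx hy
            apply hψdep k' _ hx.2 _ hy.2
            intro j hj
            exact hagree j.succ (by rwa [Fin.succ_le_succ_iff])
        · intro k x hx y hy hagree hlt
          rw [hφi x, hφi y]
          by_cases hk : k = 0
          · exfalso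
            rw [hFi] at hx hy
            rw [hk] at hlt
            rw [hx.1, hy.1] at hlt
            exact lt_irrefl _ hlt
          · obtain ⟨k', rfl⟩ := Fin.eq_succ_of_ne_zero hk
            rw [Fin.cons_succ, Fin.cons_succ]
            rw [hFi] at hx hy
            apply hψmono k' _ hx.2 _ hy.2
            · intro j hj
              exact hagree j.succ (by rwa [Fin.succ_lt_succ_iff])
            · exact hlt
    have hφ0 : ∀ i < 2*n-1, ∀ z ∈ F i, (i % 2 = 0 → φ i z 0 ∈ Ioo (0:ℝ) 1) ∧ (i % 2 = 1 → φ i z 0 = 0) := by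
      intro i hi z hz
      constructor
      · intro h2
        have himg := (heven i hi h2).2.1
        have hmem : φ i z ∈ {x : Fin (m+1) → ℝ | x 0 ∈ Ioo (0:ℝ) 1 ∧ Fin.tail x ∈ s (cSeq i)} := by
          rw [← himg]; exact mem_image_of_mem _ hz
        exact hmem.1
      · intro h2
        rw [hφodd i hi h2 z]
        exact Fin.cons_zero _ _
    rw [hUrw]
    refine ⟨?_, ⟨?_, ?_⟩, ?_⟩
    · -- surjectivity
      rw [Set.image_iUnion₂]
      ext x
      simp only [Set.mem_iUnion, Finset.mem_range]
      constructor
      · rintro ⟨i, hi, hx⟩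
        rw [himgP i hi] at hx
        exact ⟨cSeq i, cSeq_mem_cellsOf n i hi, hx.1, hx.2⟩
      · rintro ⟨C, hC, hx0, ht⟩
        obtain ⟨i, hi, rfl⟩ := cellsOf_F1set hC
        exact ⟨i, hi, by rw [himgP i hi]; exact ⟨hx0, ht⟩⟩
    · -- precellular: dependence on first coordinates
      intro k x hx y hy hagree
      obtain ⟨i, hi, hxP⟩ := (hUmem x).mp hx
      obtain ⟨j, hj, hyP⟩ := (hUmem y).mp hy
      have hij : i = j := hsame i j hi hj x y hxP hyP (hagree 0 (Fin.zero_le k))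
      subst hij
      have hx' : tmap (-(Onat i:ℝ)) x ∈ F i := (hPmem i x).mp hxP
      have hy' : tmap (-(Onat i:ℝ)) y ∈ F i := (hPmem i y).mp hyP
      have hagree' : ∀ j' : Fin (m+1), j' ≤ k →
          tmap (-(Onat i:ℝ)) x j' = tmap (-(Onat i:ℝ)) y j' := by
        intro j' hj'
        by_cases hj0 : j' = 0
        · subst hj0
          rw [tmap_apply_zero, tmap_apply_zero, hagree 0 hj']
        · rw [tmap_apply_ne _ _ hj0, tmap_apply_ne _ _ hj0]
          exact hagree j' hj'
      have hdep := (hpre i hi).1 k _ hx' _ hy' hagree'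
      rw [hΦP i hi x hxP, hΦP i hi y hyP]
      by_cases hk : k = 0
      · subst hk
        rw [tmap_apply_zero, tmap_apply_zero, hdep]
      · rw [tmap_apply_ne _ _ hk, tmap_apply_ne _ _ hk]
        exact hdep
    · -- precellular: strict monotonicity
      intro k x hx y hy hagree hxy
      obtain ⟨i, hi, hxP⟩ := (hUmem x).mp hx
      obtain ⟨j, hj, hyP⟩ := (hUmem y).mp hy
      have hx' : tmap (-(Onat i:ℝ)) x ∈ F i := (hPmem i x).mp hxP
      have hy' : tmap (-(Onat j:ℝ)) y ∈ F j := (hPmem j y).mp hyP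
      by_cases hk : k = 0
      · subst hk
        by_cases hij : i = j
        · subst hij
          have hmono := (hpre i hi).2 0 _ hx' _ hy'
            (fun j' hj' => absurd hj' (Fin.not_lt_zero j'))
            (by rw [tmap_apply_zero, tmap_apply_zero]; linarith)
          rw [hΦP i hi x hxP, hΦP i hi y hyP, tmap_apply_zero, tmap_apply_zero]
          linarith
        · have hiltj : i < j := by
            rcases Nat.lt_or_ge i j with h | h
            · exact h
            · exfalso
              have h' : j < i := by omega
              have := hlt' j i hj hi h' (y 0) (x 0) (hrange j hj y hyP) (hrange i hi x hxP)
              linarith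
          rw [hΦP i hi x hxP, hΦP j hj y hyP, tmap_apply_zero, tmap_apply_zero]
          have hbx := hφ0 i hi _ hx'
          have hby := hφ0 j hj _ hy'
          rcases Nat.mod_two_eq_zero_or_one i with h2i | h2i <;>
            rcases Nat.mod_two_eq_zero_or_one j with h2j | h2j
          · have hb1 := (hbx.1 h2i).1
            have hb2 := (hbx.1 h2i).2
            have hb3 := (hby.1 h2j).1
            rw [htgt_even i h2i, htgt_even j h2j]
            have hnat : i/2 + 1 ≤ j/2 := by omega
            have : ((i/2 : ℕ) : ℝ) + 1 ≤ ((j/2 : ℕ) : ℝ) := by exact_mod_cast hnat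
            linarith
          · have hb1 := (hbx.1 h2i).2
            have hb3 := hby.2 h2j
            rw [htgt_even i h2i, htgt_odd j h2j, hb3]
            have hnat : i/2 + 1 ≤ (j+1)/2 := by omega
            have : ((i/2 : ℕ) : ℝ) + 1 ≤ (((j+1)/2 : ℕ) : ℝ) := by exact_mod_cast hnat
            linarith
          · have hb1 := hbx.2 h2i
            have hb3 := (hby.1 h2j).1
            rw [htgt_odd i h2i, htgt_even j h2j, hb1]
            have hnat : (i+1)/2 ≤ j/2 := by omega
            have : (((i+1)/2 : ℕ) : ℝ) ≤ ((j/2 : ℕ) : ℝ) := by exact_mod_cast hnat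
            linarith
          · have hb1 := hbx.2 h2i
            have hb3 := hby.2 h2j
            rw [htgt_odd i h2i, htgt_odd j h2j, hb1, hb3]
            have hnat : (i+1)/2 < (j+1)/2 := by omega
            have : (((i+1)/2 : ℕ) : ℝ) < (((j+1)/2 : ℕ) : ℝ) := by exact_mod_cast hnat
            linarith
      · have h0k : (0 : Fin (m+1)) < k := by
          rcases Fin.eq_zero_or_eq_succ k with h | ⟨k', rfl⟩
          · exact absurd h hk
          · exact Fin.succ_pos k'
        have hij : i = j := hsame i j hi hj x y hxP hyP (hagree 0 h0k)
        subst hij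
        have hagree' : ∀ j' : Fin (m+1), j' < k →
            tmap (-(Onat i:ℝ)) x j' = tmap (-(Onat i:ℝ)) y j' := by
          intro j' hj'
          by_cases hj0 : j' = 0
          · subst hj0
            rw [tmap_apply_zero, tmap_apply_zero, hagree 0 hj']
          · rw [tmap_apply_ne _ _ hj0, tmap_apply_ne _ _ hj0]
            exact hagree j' hj'
        have hmono := (hpre i hi).2 k _ hx' _ hy' hagree'
          (by rw [tmap_apply_ne _ _ hk, tmap_apply_ne _ _ hk]; exact hxy)
        rw [hΦP i hi x hxP, hΦP i hi y hyP, tmap_apply_ne _ _ hk, tmap_apply_ne _ _ hk]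
        exact hmono
    · -- cells map into cells, continuity on cells
      have hcellφ : ∀ i < 2*n-1, ∀ C' ∈ cellsOf (F i),
          (∃ C₂ ∈ cellsOf (ltimes n s), (fun z => tmap (tgtShift i) (φ i z)) '' C' ⊆ C₂) ∧
            ContinuousOn (fun z => tmap (tgtShift i) (φ i z)) C' := by
        intro i hi C' hC'
        rcases Nat.mod_two_eq_zero_or_one i with h2 | h2
        · obtain ⟨⟨C₂, hC₂, hsubim⟩, hcont⟩ := (heven i hi h2).2.2.2 C' hC'
          constructor
          · refine ⟨tmap (tgtShift i) '' C₂, ⟨?_, ?_⟩, ?_⟩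
            · have := Cell.tmap_image ((i/2 : ℕ) : ℤ) hC₂.1
              rw [htgt_even i h2]
              simpa only [Int.cast_natCast] using this
            · rintro z ⟨w, hw, rfl⟩
              have hwT := hC₂.2 hw
              refine ⟨cSeq i, cSeq_mem_cellsOf n i hi, ?_, ?_⟩
              · rw [cSeq, if_pos h2]
                show (tmap (tgtShift i) w) 0 ∈ Ioo _ _
                rw [tmap_apply_zero, htgt_even i h2]
                exact ⟨by linarith [hwT.1.1], by linarith [hwT.1.2]⟩
              · rw [tmap_tail]
                exact hwT.2
            · intro z hz
              obtain ⟨w, hw, rfl⟩ := hz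
              exact mem_image_of_mem _ (hsubim (mem_image_of_mem _ hw))
          · exact (continuous_tmap (tgtShift i)).comp_continuousOn hcont
        · -- odd piece
          obtain ⟨hKfort, hψmor, hFi, hφi⟩ := hodd i hi h2
          obtain ⟨c, hc, hC'eq⟩ := hC'.1
          have hC'sub := hC'.2
          set D := {y : Fin m → ℝ | ∀ j : Fin m, y j ∈ c j.succ} with hD
          have hCD : Cell D := ⟨fun j => c j.succ, fun j => hc j.succ, rfl⟩
          have hc00 : (0:ℝ) ∈ c 0 := by
            obtain ⟨x₀, hx₀⟩ := Cell.nonempty hC'.1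
            have h1 := hC'sub hx₀
            rw [hFi] at h1
            have h2' : x₀ 0 ∈ c 0 := by
              rw [hC'eq] at hx₀; exact hx₀ 0
            rwa [h1.1] at h2'
          have hconsmem : ∀ y ∈ D, Fin.cons (0:ℝ) y ∈ C' := by
            intro y hy
            rw [hC'eq]
            intro j
            induction j using Fin.cases with
            | zero => rw [Fin.cons_zero]; exact hc00
            | succ j' => rw [Fin.cons_succ]; exact hy j'
          have htailim : Fin.tail '' C' = D := by
            ext y
            constructor
            · rintro ⟨x, hx, rfl⟩
              intro j
              rw [hC'eq] at hx
              exact hx j.succ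
            · intro hy
              exact ⟨Fin.cons 0 y, hconsmem y hy, Fin.tail_cons _ _⟩
          have hDK : D ⊆ K i := by
            intro y hy
            have h1 := hC'sub (hconsmem y hy)
            rw [hFi] at h1
            rw [← Fin.tail_cons (α := fun _ => ℝ) (0:ℝ) y]
            exact h1.2
          obtain ⟨⟨D₂, hD₂, hsubim⟩, hcont⟩ := hψmor.2.2 D ⟨hCD, hDK⟩
          constructor
          · refine ⟨{x : Fin (m+1) → ℝ | x 0 = (((i+1)/2 : ℕ) : ℝ) ∧ Fin.tail x ∈ D₂},
              ⟨?_, ?_⟩, ?_⟩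
            · have := Cell.cons_point (((i+1)/2 : ℕ) : ℤ) hD₂.1
              simpa only [Int.cast_natCast] using this
            · intro z hz
              refine ⟨cSeq i, cSeq_mem_cellsOf n i hi, ?_, ?_⟩
              · rw [cSeq, if_neg (by omega)]
                exact hz.1
              · exact hD₂.2 hz.2
            · rintro z ⟨x, hx, rfl⟩
              constructor
              · show (tmap (tgtShift i) (φ i x)) 0 = _
                rw [hφi x, tmap_cons, Fin.cons_zero, htgt_odd i h2]
                ring
              · show Fin.tail (tmap (tgtShift i) (φ i x)) ∈ D₂
                rw [hφi x, tmap_cons, Fin.tail_cons]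
                apply hsubim
                refine ⟨Fin.tail x, ?_, rfl⟩
                rw [← htailim]
                exact mem_image_of_mem _ hx
          · have heqn : ∀ x ∈ C', tmap (tgtShift i) (φ i x)
                = Fin.cons (tgtShift i) (ψ i (Fin.tail x)) := by
              intro x hx
              rw [hφi x, tmap_cons, zero_add]
            have htails : ContinuousOn (fun x : Fin (m+1) → ℝ => ψ i (Fin.tail x)) C' := by
              apply hcont.comp continuous_tail.continuousOn
              intro x hx
              rw [← htailim]
              exact mem_image_of_mem _ hx
            have hcons : ContinuousOn
                (fun x : Fin (m+1) → ℝ => Fin.cons (tgtShift i) (ψ i (Fin.tail x))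
                  : (Fin (m+1) → ℝ) → Fin (m+1) → ℝ) C' := by
              apply continuousOn_pi.mpr
              intro j
              induction j using Fin.cases with
              | zero =>
                simp only [Fin.cons_zero]
                exact continuousOn_const
              | succ j' =>
                simp only [Fin.cons_succ]
                exact (continuous_apply j').comp_continuousOn htails
            exact hcons.congr heqn
      -- locate each cell of the union inside a single piece
      intro C hC
      obtain ⟨hcell, hsub⟩ := hC
      obtain ⟨xb, hxb⟩ := Cell.nonempty hcell
      obtain ⟨i, hi, hxbP⟩ := (hUmem xb).mp (hsub hxb)
      have hCP : C ⊆ P i := by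
        intro x hx
        obtain ⟨j, hj, hxP⟩ := (hUmem x).mp (hsub hx)
        suffices h : j = i by rwa [h] at hxP
        obtain ⟨c, hc, hCeq⟩ := hcell
        have hxb0 : xb 0 ∈ c 0 := by rw [hCeq] at hxb; exact hxb 0
        have hx0 : x 0 ∈ c 0 := by rw [hCeq] at hx; exact hx 0
        obtain ⟨l, hl | hl⟩ := hc 0
        · rw [hl, mem_singleton_iff] at hxb0 hx0
          apply hRuniq j i hj hi (x 0) (hrange j hj x hxP)
          rw [hx0, ← hxb0]
          exact hrange i hi xb hxbP
        · rw [hl, mem_Ioo] at hxb0 hx0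
          by_contra hne
          rcases Nat.lt_or_ge j i with h | h
          · obtain ⟨z, hz1, hz2⟩ := hsep j i hj hi h (x 0) (xb 0)
              (hrange j hj x hxP) (hrange i hi xb hxbP)
            refine not_int_mem_unit_Ioo (k := l) (z := (z:ℤ)) ⟨?_, ?_⟩
            · push_cast; linarith [hx0.1]
            · push_cast; linarith [hxb0.2]
          · have h' : i < j := by omega
            obtain ⟨z, hz1, hz2⟩ := hsep i j hi hj h' (xb 0) (x 0)
              (hrange i hi xb hxbP) (hrange j hj x hxP)
            refine not_int_mem_unit_Ioo (k := l) (z := (z:ℤ)) ⟨?_, ?_⟩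
            · push_cast; linarith [hxb0.1]
            · push_cast; linarith [hx0.2]
      have hCcell' : (tmap (-(Onat i:ℝ)) '' C) ∈ cellsOf (F i) := by
        constructor
        · have := Cell.tmap_image (-(Onat i : ℤ)) hcell
          simpa using this
        · rintro z ⟨w, hw, rfl⟩
          exact (hPmem i w).mp (hCP hw)
      obtain ⟨⟨C₂, hC₂, hsubim⟩, hcont⟩ := hcellφ i hi _ hCcell'
      constructor
      · refine ⟨C₂, hC₂, ?_⟩
        rintro z ⟨x, hx, rfl⟩
        rw [hΦP i hi x (hCP hx)]
        exact hsubim ⟨tmap (-(Onat i:ℝ)) x, mem_image_of_mem _ hx, rfl⟩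
      · have hmaps : Set.MapsTo (tmap (-(Onat i:ℝ))) C (tmap (-(Onat i:ℝ)) '' C) :=
          fun x hx => mem_image_of_mem _ hx
        have := hcont.comp (continuous_tmap (-(Onat i:ℝ))).continuousOn hmaps
        exact this.congr (fun x hx => hΦP i hi x (hCP hx))

end Forts
end

section
/- Let C⊆ℝ^ℓ be a cell of length ℓ (constructed from continuous functions) and let 𝒞 be an integer cell of length ℓ having the same type as C. Then there exists a unique surjective natural cellular map A^{𝒞,C}: 𝒞→C. -/
open Set

namespace Forts

/-- Cells (in the o-minimal sense, built from continuous positive functions), together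
with their type `τ ∈ {0,1}^ℓ` (here `false` = point factor, `true` = interval factor). -/
inductive IsCell : (ℓ : ℕ) → Set (Fin ℓ → ℝ) → (Fin ℓ → Bool) → Prop
  | point (a : ℝ) : IsCell 1 {x : Fin 1 → ℝ | x 0 = a} (fun _ => false)
  | interval (a b : ℝ) (hab : a < b) :
      IsCell 1 {x : Fin 1 → ℝ | x 0 ∈ Set.Ioo a b} (fun _ => true)
  | graph {ℓ : ℕ} (C : Set (Fin ℓ → ℝ)) (τ : Fin ℓ → Bool) (f : (Fin ℓ → ℝ) → ℝ)
      (hC : IsCell ℓ C τ) (hfpos : ∀ x ∈ C, 0 < f x) (hf : ContinuousOn f C) :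
      IsCell (ℓ + 1)
        {x : Fin (ℓ + 1) → ℝ | Fin.init x ∈ C ∧ x (Fin.last ℓ) = f (Fin.init x)}
        (Fin.snoc τ false)
  | band {ℓ : ℕ} (C : Set (Fin ℓ → ℝ)) (τ : Fin ℓ → Bool) (f g : (Fin ℓ → ℝ) → ℝ)
      (hC : IsCell ℓ C τ) (hfpos : ∀ x ∈ C, 0 < f x)
      (hf : ContinuousOn f C) (hg : ContinuousOn g C) (hfg : ∀ x ∈ C, f x < g x) :
      IsCell (ℓ + 1)
        {x : Fin (ℓ + 1) → ℝ | Fin.init x ∈ C ∧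
          f (Fin.init x) < x (Fin.last ℓ) ∧ x (Fin.last ℓ) < g (Fin.init x)}
        (Fin.snoc τ true)

/-- An integer cell of type `τ`. -/
def CellTyped {ℓ : ℕ} (S : Set (Fin ℓ → ℝ)) (τ : Fin ℓ → Bool) : Prop :=
  ∃ c : Fin ℓ → Set ℝ,
    (∀ i, (τ i = true → ∃ k : ℤ, c i = Set.Ioo (k : ℝ) ((k : ℝ) + 1)) ∧
      (τ i = false → ∃ k : ℤ, c i = {(k : ℝ)})) ∧
    S = {x | ∀ i, x i ∈ c i}

/-- A map is natural on `X` if each coordinate function, with the earlier coordinates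
fixed, is affine in the current coordinate. -/
def NaturalOn {ℓ : ℕ} (X : Set (Fin ℓ → ℝ)) (φ : (Fin ℓ → ℝ) → (Fin ℓ → ℝ)) : Prop :=
  ∀ i : Fin ℓ, ∀ x ∈ X, ∃ a b : ℝ,
    ∀ z ∈ X, (∀ j : Fin ℓ, j < i → z j = x j) → φ z i = a * z i + b


lemma affine_image_Ioo (a b p q : ℝ) (ha : 0 < a) :
    (fun t => a * t + b) '' Ioo p q = Ioo (a * p + b) (a * q + b) := by
  ext s
  constructor
  · rintro ⟨t, ht, rfl⟩
    exact ⟨by dsimp only; nlinarith [ht.1], by dsimp only; nlinarith [ht.2]⟩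
  · rintro ⟨h1, h2⟩
    refine ⟨(s - b) / a, ⟨?_, ?_⟩, by field_simp; ring⟩
    · rw [lt_div_iff₀ ha]; linarith
    · rw [div_lt_iff₀ ha]; linarith

lemma Ioo_eq_Ioo' {p q p' q' : ℝ} (h : p < q) (he : Ioo p q = Ioo p' q') :
    p = p' ∧ q = q' := by
  have hne : (Ioo p' q').Nonempty := he ▸ nonempty_Ioo.2 h
  have h' : p' < q' := nonempty_Ioo.1 hne
  constructor
  · rw [← csInf_Ioo h, ← csInf_Ioo h', he]
  · rw [← csSup_Ioo h, ← csSup_Ioo h', he]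

lemma affine_coeffs {a b p q : ℝ} {m : ℤ} (ha : 0 < a)
    (him : (fun t => a * t + b) '' Ioo (m : ℝ) ((m : ℝ) + 1) = Ioo p q) :
    a = q - p ∧ b = p - a * m := by
  rw [affine_image_Ioo _ _ _ _ ha] at him
  have := Ioo_eq_Ioo' (by nlinarith) him
  constructor <;> linarith [this.1, this.2]

lemma precellular_inj {ℓ : ℕ} {X : Set (Fin ℓ → ℝ)} {φ : (Fin ℓ → ℝ) → (Fin ℓ → ℝ)}
    (h : (∀ i : Fin ℓ, ∀ x ∈ X, ∀ y ∈ X, (∀ j : Fin ℓ, j < i → x j = y j) → x i < y i → φ x i < φ y i))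
    {x y : Fin ℓ → ℝ} (hx : x ∈ X) (hy : y ∈ X) (hxy : φ x = φ y) : x = y := by
  classical
  by_contra hne
  have hS : (Finset.univ.filter (fun i => x i ≠ y i)).Nonempty := by
    by_contra hS
    rw [Finset.not_nonempty_iff_eq_empty, Finset.filter_eq_empty_iff] at hS
    exact hne (funext fun i => not_not.1 (hS (Finset.mem_univ i)))
  set i := (Finset.univ.filter (fun i => x i ≠ y i)).min' hS with hi
  have hmem := (Finset.univ.filter (fun i => x i ≠ y i)).min'_mem hS
  rw [Finset.mem_filter] at hmem
  have hlt : ∀ j : Fin ℓ, j < i → x j = y j := by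
    intro j hj
    by_contra hne'
    exact absurd (Finset.min'_le _ j (Finset.mem_filter.2 ⟨Finset.mem_univ j, hne'⟩)) (not_le.2 hj)
  rcases lt_trichotomy (x i) (y i) with hlt' | heq | hgt
  · exact absurd (congrFun hxy i) (ne_of_lt (h i x hx y hy hlt hlt'))
  · exact hmem.2 heq
  · exact absurd (congrFun hxy i).symm (ne_of_lt (h i y hy x hx (fun j hj => (hlt j hj).symm) hgt))

lemma lt_last_castSucc {n : ℕ} {j : Fin (n + 1)} (h : j < Fin.last n) :
    ∃ j1 : Fin n, j = j1.castSucc :=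
  ⟨j.castPred (Fin.ne_last_of_lt h), (Fin.castSucc_castPred _ _).symm⟩

/-- The combined "good map" property. -/
def GoodMap {ℓ : ℕ} (C IC : Set (Fin ℓ → ℝ)) (φ : (Fin ℓ → ℝ) → (Fin ℓ → ℝ)) : Prop :=
  φ '' IC = C ∧ Precellular IC φ ∧ ContinuousOn φ IC ∧ NaturalOn IC φ

theorem main_aux {ℓ : ℕ} {C : Set (Fin ℓ → ℝ)} {τ : Fin ℓ → Bool} (hC : IsCell ℓ C τ) :
    ∀ IC : Set (Fin ℓ → ℝ), CellTyped IC τ →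
      ∃ φ : (Fin ℓ → ℝ) → (Fin ℓ → ℝ), GoodMap C IC φ ∧
        ∀ φ', GoodMap C IC φ' → Set.EqOn φ φ' IC := by
  induction hC with
  | point a =>
    intro IC hIC
    obtain ⟨c, hc, hICeq⟩ := hIC
    obtain ⟨k, hk⟩ := (hc 0).2 rfl
    have hmem : ∀ x : Fin 1 → ℝ, x ∈ IC ↔ x 0 = (k : ℝ) := by
      intro x
      rw [hICeq]
      constructor
      · intro h; have := h 0; rwa [hk, mem_singleton_iff] at this
      · intro h i
        obtain rfl : i = (0 : Fin 1) := Subsingleton.elim i 0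
        rw [hk]; exact h
    refine ⟨fun _ _ => a, ⟨?_, ⟨?_, ?_⟩, ?_, ?_⟩, ?_⟩
    · ext y
      simp only [mem_image, mem_setOf_eq]
      constructor
      · rintro ⟨z, hz, rfl⟩; rfl
      · intro hy
        refine ⟨fun _ => (k : ℝ), (hmem _).2 rfl, ?_⟩
        funext i
        obtain rfl : i = (0 : Fin 1) := Subsingleton.elim i 0
        exact hy.symm
    · intro i x _ y _ _; rfl
    · intro i x hx y hy _ hlt
      exfalso
      obtain rfl : i = (0 : Fin 1) := Subsingleton.elim i 0
      rw [(hmem x).1 hx, (hmem y).1 hy] at hlt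
      exact lt_irrefl _ hlt
    · exact continuousOn_const
    · intro i x _; exact ⟨0, a, fun z _ _ => by ring⟩
    · rintro φ' ⟨him, hpre, hcont, hnat⟩ p hp
      have hφ'p : φ' p ∈ {x : Fin 1 → ℝ | x 0 = a} := him ▸ mem_image_of_mem φ' hp
      funext i
      obtain rfl : i = (0 : Fin 1) := Subsingleton.elim i 0
      exact hφ'p.symm
  | interval a b hab =>
    intro IC hIC
    obtain ⟨c, hc, hICeq⟩ := hIC
    obtain ⟨k, hk⟩ := (hc 0).1 rfl
    have hmem : ∀ x : Fin 1 → ℝ, x ∈ IC ↔ x 0 ∈ Ioo (k : ℝ) ((k : ℝ) + 1) := by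
      intro x
      rw [hICeq]
      constructor
      · intro h; have := h 0; rwa [hk] at this
      · intro h i
        obtain rfl : i = (0 : Fin 1) := Subsingleton.elim i 0
        rw [hk]; exact h
    have hA0 : (0 : ℝ) < b - a := by linarith
    refine ⟨fun x _ => (b - a) * x 0 + (a - (b - a) * k), ⟨?_, ⟨?_, ?_⟩, ?_, ?_⟩, ?_⟩
    · ext y
      simp only [mem_image, mem_setOf_eq]
      constructor
      · rintro ⟨z, hz, rfl⟩
        have hz0 := (hmem z).1 hz
        exact ⟨by dsimp only; nlinarith [hz0.1], by dsimp only; nlinarith [hz0.2]⟩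
      · intro hy
        refine ⟨fun _ => (k : ℝ) + (y 0 - a) / (b - a), (hmem _).2 ?_, ?_⟩
        · constructor
          · have : (0 : ℝ) < (y 0 - a) / (b - a) := div_pos (by linarith [hy.1]) hA0
            linarith
          · have : (y 0 - a) / (b - a) < 1 := (div_lt_one hA0).2 (by linarith [hy.2])
            linarith
        · funext i
          obtain rfl : i = (0 : Fin 1) := Subsingleton.elim i 0
          dsimp only
          field_simp
          ring
    · intro i x _ y _ h
      have h0 := h 0 (Fin.zero_le i)
      dsimp only
      rw [h0]
    · intro i x _ y _ _ hlt
      obtain rfl : i = (0 : Fin 1) := Subsingleton.elim i 0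
      dsimp only
      nlinarith
    · exact (continuous_pi fun _ =>
        (continuous_const.mul (continuous_apply 0)).add continuous_const).continuousOn
    · intro i x _
      refine ⟨b - a, a - (b - a) * k, fun z _ _ => ?_⟩
      obtain rfl : i = (0 : Fin 1) := Subsingleton.elim i 0
      rfl
    · rintro φ' ⟨him, hpre, hcont, hnat⟩ p hp
      funext i
      obtain rfl : i = (0 : Fin 1) := Subsingleton.elim i 0
      obtain ⟨a', b', hab'⟩ := hnat 0 p hp
      have hz : ∀ z ∈ IC, φ' z 0 = a' * z 0 + b' := fun z hzm =>
        hab' z hzm (fun j hj => absurd hj (by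
          obtain rfl : j = (0 : Fin 1) := Subsingleton.elim j 0
          exact lt_irrefl 0))
      have h14 : (fun _ => (k : ℝ) + 1/4 : Fin 1 → ℝ) ∈ IC := (hmem _).2 ⟨by linarith, by linarith⟩
      have h12 : (fun _ => (k : ℝ) + 1/2 : Fin 1 → ℝ) ∈ IC := (hmem _).2 ⟨by linarith, by linarith⟩
      have hinc := hpre.2 0 _ h14 _ h12 (fun j hj => absurd hj (by
          obtain rfl : j = (0 : Fin 1) := Subsingleton.elim j 0
          exact lt_irrefl 0)) (by norm_num)
      rw [hz _ h14, hz _ h12] at hinc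
      have ha' : 0 < a' := by nlinarith
      have himg : (fun t => a' * t + b') '' Ioo (k : ℝ) ((k : ℝ) + 1) = Ioo a b := by
        ext s
        constructor
        · rintro ⟨t, ht, rfl⟩
          have hzIC : (fun _ => t : Fin 1 → ℝ) ∈ IC := (hmem _).2 ht
          have hmemC : φ' (fun _ => t) ∈ {x : Fin 1 → ℝ | x 0 ∈ Ioo a b} :=
            him ▸ mem_image_of_mem φ' hzIC
          have h0 := hz _ hzIC
          have hmm : φ' (fun _ => t) 0 ∈ Ioo a b := hmemC
          rw [h0] at hmm
          exact hmm
        · intro hs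
          have hsC : (fun _ => s : Fin 1 → ℝ) ∈ {x : Fin 1 → ℝ | x 0 ∈ Ioo a b} := hs
          rw [← him] at hsC
          obtain ⟨z, hzIC, hφz⟩ := hsC
          refine ⟨z 0, (hmem z).1 hzIC, ?_⟩
          show a' * z 0 + b' = s
          rw [← hz z hzIC, hφz]
      obtain ⟨hA, hB⟩ := affine_coeffs ha' himg
      subst hA
      subst hB
      rw [hz p hp]
  | @graph ℓ C τ f hC hfpos hf IH =>
    intro IC' hIC'
    obtain ⟨c, hc, hICeq⟩ := hIC'
    set IC : Set (Fin ℓ → ℝ) := {x : Fin ℓ → ℝ | ∀ i, x i ∈ c i.castSucc} with hICdef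
    have hICt : CellTyped IC τ := by
      refine ⟨fun i => c i.castSucc, fun i => ?_, rfl⟩
      have := hc i.castSucc
      rwa [Fin.snoc_castSucc] at this
    obtain ⟨m, hm⟩ : ∃ m : ℤ, c (Fin.last ℓ) = {(m : ℝ)} := by
      have := (hc (Fin.last ℓ)).2
      rw [Fin.snoc_last] at this
      exact this rfl
    have hmem : ∀ x : Fin (ℓ + 1) → ℝ,
        x ∈ IC' ↔ Fin.init x ∈ IC ∧ x (Fin.last ℓ) ∈ c (Fin.last ℓ) := by
      intro x
      rw [hICeq]
      constructor
      · intro h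
        exact ⟨fun i => h i.castSucc, h _⟩
      · rintro ⟨h1, h2⟩ i
        cases i using Fin.lastCases with
        | last => exact h2
        | cast j => exact h1 j
    obtain ⟨φ, ⟨hφim, hφpre, hφcont, hφnat⟩, hφuniq⟩ := IH IC hICt
    have hφC : ∀ x ∈ IC, φ x ∈ C := fun x hx => hφim ▸ mem_image_of_mem φ hx
    have hinitIC : ∀ x ∈ IC', Fin.init x ∈ IC := fun x hx => ((hmem x).1 hx).1
    have hlast : ∀ x ∈ IC', x (Fin.last ℓ) = (m : ℝ) := fun x hx => by
      have := ((hmem x).1 hx).2; rwa [hm, mem_singleton_iff] at this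
    have hsnoc : ∀ x ∈ IC, Fin.snoc x (m : ℝ) ∈ IC' := fun x hx =>
      (hmem _).2 ⟨by rwa [Fin.init_snoc], by rw [Fin.snoc_last, hm]; exact rfl⟩
    have hsnocw : ∀ w ∈ IC', Fin.snoc (Fin.init w) (m : ℝ) = w := fun w hw => by
      rw [← hlast w hw, Fin.snoc_init_self]
    refine ⟨fun x => Fin.snoc (φ (Fin.init x)) (f (φ (Fin.init x))), ⟨?_, ⟨?_, ?_⟩, ?_, ?_⟩, ?_⟩
    · -- image
      ext z
      simp only [mem_image, mem_setOf_eq]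
      constructor
      · rintro ⟨x, hx, rfl⟩
        have h1 := hφC _ (hinitIC x hx)
        refine ⟨?_, ?_⟩
        · simp only [Fin.init_snoc]; exact h1
        · simp only [Fin.snoc_last, Fin.init_snoc]
      · rintro ⟨h1, h2⟩
        rw [← hφim] at h1
        obtain ⟨x, hx, hφx⟩ := h1
        refine ⟨Fin.snoc x (m : ℝ), hsnoc x hx, ?_⟩
        simp only [Fin.init_snoc]
        rw [hφx, ← h2, Fin.snoc_init_self]
    · -- precellular 1
      intro i x hx y hy h
      cases i using Fin.lastCases with
      | last =>
        have hxy : Fin.init x = Fin.init y := funext fun j => h j.castSucc (Fin.le_last _)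
        simp only [Fin.snoc_last, hxy]
      | cast i0 =>
        simp only [Fin.snoc_castSucc]
        exact hφpre.1 i0 _ (hinitIC x hx) _ (hinitIC y hy) fun j hj =>
          h j.castSucc (Fin.castSucc_le_castSucc_iff.2 hj)
    · -- precellular 2
      intro i x hx y hy h hlt
      cases i using Fin.lastCases with
      | last =>
        exfalso
        rw [hlast x hx, hlast y hy] at hlt
        exact lt_irrefl _ hlt
      | cast i0 =>
        simp only [Fin.snoc_castSucc]
        exact hφpre.2 i0 _ (hinitIC x hx) _ (hinitIC y hy) (fun j hj =>
          h j.castSucc (Fin.castSucc_lt_castSucc_iff.2 hj)) hlt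
    · -- continuity
      rw [continuousOn_pi]
      intro i
      have hcinit : Continuous (fun x : Fin (ℓ + 1) → ℝ => Fin.init x) :=
        continuous_pi fun j => continuous_apply j.castSucc
      have h1 : ContinuousOn (fun x : Fin (ℓ + 1) → ℝ => φ (Fin.init x)) IC' :=
        hφcont.comp hcinit.continuousOn fun x hx => hinitIC x hx
      cases i using Fin.lastCases with
      | last =>
        simp only [Fin.snoc_last]
        exact hf.comp h1 fun x hx => hφC _ (hinitIC x hx)
      | cast i0 =>
        simp only [Fin.snoc_castSucc]
        exact (continuous_apply i0).comp_continuousOn h1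
    · -- natural
      intro i x hx
      cases i using Fin.lastCases with
      | last =>
        refine ⟨0, f (φ (Fin.init x)), fun z hz hagree => ?_⟩
        have hzx : Fin.init z = Fin.init x :=
          funext fun j => hagree j.castSucc (Fin.castSucc_lt_last j)
        simp only [Fin.snoc_last, hzx]
        ring
      | cast i0 =>
        obtain ⟨A, B, hAB⟩ := hφnat i0 (Fin.init x) (hinitIC x hx)
        refine ⟨A, B, fun z hz hagree => ?_⟩
        simp only [Fin.snoc_castSucc]
        exact hAB (Fin.init z) (hinitIC z hz) fun j hj =>
          hagree j.castSucc (Fin.castSucc_lt_castSucc_iff.2 hj)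
    · -- uniqueness
      rintro φ' ⟨him', hpre', hcont', hnat'⟩
      have hψgood : GoodMap C IC (fun z => Fin.init (φ' (Fin.snoc z (m : ℝ)))) := by
        refine ⟨?_, ⟨?_, ?_⟩, ?_, ?_⟩
        · ext y
          simp only [mem_image]
          constructor
          · rintro ⟨z, hz, rfl⟩
            have h2 : φ' (Fin.snoc z (m : ℝ)) ∈
                {x : Fin (ℓ+1) → ℝ | Fin.init x ∈ C ∧ x (Fin.last ℓ) = f (Fin.init x)} := by
              rw [← him']; exact mem_image_of_mem φ' (hsnoc z hz)
            exact h2.1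
          · intro hy
            have hzC' : Fin.snoc y (f y) ∈
                {x : Fin (ℓ+1) → ℝ | Fin.init x ∈ C ∧ x (Fin.last ℓ) = f (Fin.init x)} :=
              ⟨by rw [Fin.init_snoc]; exact hy, by rw [Fin.snoc_last, Fin.init_snoc]⟩
            rw [← him'] at hzC'
            obtain ⟨w, hw, hφw⟩ := hzC'
            refine ⟨Fin.init w, hinitIC w hw, ?_⟩
            show Fin.init (φ' (Fin.snoc (Fin.init w) (m : ℝ))) = y
            rw [hsnocw w hw, hφw, Fin.init_snoc]
        · intro i x hx y hy h
          show φ' (Fin.snoc x (m:ℝ)) i.castSucc = φ' (Fin.snoc y (m:ℝ)) i.castSucc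
          refine hpre'.1 i.castSucc _ (hsnoc x hx) _ (hsnoc y hy) fun j hj => ?_
          obtain ⟨j1, rfl⟩ := lt_last_castSucc (lt_of_le_of_lt hj (Fin.castSucc_lt_last i))
          rw [Fin.snoc_castSucc, Fin.snoc_castSucc]
          exact h j1 (Fin.castSucc_le_castSucc_iff.1 hj)
        · intro i x hx y hy h hlt
          show φ' (Fin.snoc x (m:ℝ)) i.castSucc < φ' (Fin.snoc y (m:ℝ)) i.castSucc
          refine hpre'.2 i.castSucc _ (hsnoc x hx) _ (hsnoc y hy) (fun j hj => ?_) ?_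
          · obtain ⟨j1, rfl⟩ := lt_last_castSucc (lt_trans hj (Fin.castSucc_lt_last i))
            rw [Fin.snoc_castSucc, Fin.snoc_castSucc]
            exact h j1 (Fin.castSucc_lt_castSucc_iff.1 hj)
          · rw [Fin.snoc_castSucc, Fin.snoc_castSucc]
            exact hlt
        · have hcs : Continuous (fun z : Fin ℓ → ℝ => (Fin.snoc z (m:ℝ) : Fin (ℓ+1) → ℝ)) := by
            refine continuous_pi fun j => ?_
            cases j using Fin.lastCases with
            | last => simpa using continuous_const
            | cast i => simpa using continuous_apply i
          have h2 : ContinuousOn (fun z : Fin ℓ → ℝ => φ' (Fin.snoc z (m:ℝ))) IC :=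
            hcont'.comp hcs.continuousOn fun z hz => hsnoc z hz
          rw [continuousOn_pi]
          intro i
          exact (continuous_apply i.castSucc).comp_continuousOn h2
        · intro i x hx
          obtain ⟨A, B, hAB⟩ := hnat' i.castSucc (Fin.snoc x (m:ℝ)) (hsnoc x hx)
          refine ⟨A, B, fun z hz hagree => ?_⟩
          have hg2 : ∀ j, j < i.castSucc → (Fin.snoc z (m:ℝ) : Fin (ℓ+1) → ℝ) j = (Fin.snoc x (m:ℝ) : Fin (ℓ+1) → ℝ) j := by
            intro j hj
            obtain ⟨j1, rfl⟩ := lt_last_castSucc (lt_trans hj (Fin.castSucc_lt_last i))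
            rw [Fin.snoc_castSucc, Fin.snoc_castSucc]
            exact hagree j1 (Fin.castSucc_lt_castSucc_iff.1 hj)
          have h3 := hAB _ (hsnoc z hz) hg2
          show φ' (Fin.snoc z (m:ℝ)) i.castSucc = A * z i + B
          rw [h3, Fin.snoc_castSucc]
      have hEq := hφuniq _ hψgood
      intro p hp
      have hx := hinitIC p hp
      have hpeq : Fin.snoc (Fin.init p) ((m:ℝ)) = p := hsnocw p hp
      have hEqp : φ (Fin.init p) = Fin.init (φ' (Fin.snoc (Fin.init p) (m:ℝ))) := hEq hx
      rw [hpeq] at hEqp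
      funext i
      cases i using Fin.lastCases with
      | cast i0 =>
        show (Fin.snoc (φ (Fin.init p)) (f (φ (Fin.init p))) : Fin (ℓ+1) → ℝ) i0.castSucc = φ' p i0.castSucc
        rw [Fin.snoc_castSucc, hEqp]
        rfl
      | last =>
        show (Fin.snoc (φ (Fin.init p)) (f (φ (Fin.init p))) : Fin (ℓ+1) → ℝ) (Fin.last ℓ) = φ' p (Fin.last ℓ)
        rw [Fin.snoc_last]
        have hC' : φ' p ∈
            {x : Fin (ℓ+1) → ℝ | Fin.init x ∈ C ∧ x (Fin.last ℓ) = f (Fin.init x)} := by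
          rw [← him']; exact mem_image_of_mem φ' hp
        rw [hC'.2, hEqp]
  | @band ℓ C τ f g hC hfpos hf hg hfg IH =>
    intro IC' hIC'
    obtain ⟨c, hc, hICeq⟩ := hIC'
    set IC : Set (Fin ℓ → ℝ) := {x : Fin ℓ → ℝ | ∀ i, x i ∈ c i.castSucc} with hICdef
    have hICt : CellTyped IC τ := by
      refine ⟨fun i => c i.castSucc, fun i => ?_, rfl⟩
      have := hc i.castSucc
      rwa [Fin.snoc_castSucc] at this
    obtain ⟨m, hm⟩ : ∃ m : ℤ, c (Fin.last ℓ) = Ioo (m : ℝ) ((m : ℝ) + 1) := by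
      have := (hc (Fin.last ℓ)).1
      rw [Fin.snoc_last] at this
      exact this rfl
    have hmem : ∀ x : Fin (ℓ + 1) → ℝ,
        x ∈ IC' ↔ Fin.init x ∈ IC ∧ x (Fin.last ℓ) ∈ c (Fin.last ℓ) := by
      intro x
      rw [hICeq]
      constructor
      · intro h
        exact ⟨fun i => h i.castSucc, h _⟩
      · rintro ⟨h1, h2⟩ i
        cases i using Fin.lastCases with
        | last => exact h2
        | cast j => exact h1 j
    obtain ⟨φ, ⟨hφim, hφpre, hφcont, hφnat⟩, hφuniq⟩ := IH IC hICt
    have hφC : ∀ x ∈ IC, φ x ∈ C := fun x hx => hφim ▸ mem_image_of_mem φ hx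
    have hinitIC : ∀ x ∈ IC', Fin.init x ∈ IC := fun x hx => ((hmem x).1 hx).1
    have hlast : ∀ x ∈ IC', x (Fin.last ℓ) ∈ Ioo (m : ℝ) ((m : ℝ) + 1) := fun x hx => by
      have := ((hmem x).1 hx).2; rwa [hm] at this
    have hsnoc : ∀ x ∈ IC, ∀ t ∈ Ioo (m : ℝ) ((m : ℝ) + 1), Fin.snoc x t ∈ IC' := fun x hx t ht =>
      (hmem _).2 ⟨by rwa [Fin.init_snoc], by rw [Fin.snoc_last, hm]; exact ht⟩
    have ht0 : (m : ℝ) + 1/2 ∈ Ioo (m : ℝ) ((m : ℝ) + 1) := by constructor <;> norm_num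
    refine ⟨fun x => Fin.snoc (φ (Fin.init x))
      (f (φ (Fin.init x)) + (g (φ (Fin.init x)) - f (φ (Fin.init x))) * (x (Fin.last ℓ) - m)),
      ⟨?_, ⟨?_, ?_⟩, ?_, ?_⟩, ?_⟩
    · -- image
      ext z
      simp only [mem_image, mem_setOf_eq]
      constructor
      · rintro ⟨x, hx, rfl⟩
        have h1 := hφC _ (hinitIC x hx)
        have h2 := hfg _ h1
        have h3 := hlast x hx
        refine ⟨?_, ?_, ?_⟩
        · simp only [Fin.init_snoc]; exact h1
        · simp only [Fin.snoc_last, Fin.init_snoc]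
          nlinarith [h3.1, h3.2]
        · simp only [Fin.snoc_last, Fin.init_snoc]
          nlinarith [h3.1, h3.2]
      · rintro ⟨h1, h2, h3⟩
        rw [← hφim] at h1
        obtain ⟨x, hx, hφx⟩ := h1
        have hgf : (0 : ℝ) < g (Fin.init z) - f (Fin.init z) := by
          have := hfg _ (hφx ▸ hφC x hx)
          linarith
        set t : ℝ := (m : ℝ) + (z (Fin.last ℓ) - f (Fin.init z)) / (g (Fin.init z) - f (Fin.init z)) with htdef
        have htIoo : t ∈ Ioo (m : ℝ) ((m : ℝ) + 1) := by
          constructor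
          · have : (0:ℝ) < (z (Fin.last ℓ) - f (Fin.init z)) / (g (Fin.init z) - f (Fin.init z)) :=
              div_pos (by linarith) hgf
            rw [htdef]; linarith
          · have : (z (Fin.last ℓ) - f (Fin.init z)) / (g (Fin.init z) - f (Fin.init z)) < 1 :=
              (div_lt_one hgf).2 (by linarith)
            rw [htdef]; linarith
        refine ⟨Fin.snoc x t, hsnoc x hx t htIoo, ?_⟩
        simp only [Fin.init_snoc, Fin.snoc_last]
        rw [hφx]
        have hE : f (Fin.init z) + (g (Fin.init z) - f (Fin.init z)) * (t - m) = z (Fin.last ℓ) := by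
          rw [htdef]
          field_simp
          ring
        rw [hE, Fin.snoc_init_self]
    · -- precellular 1
      intro i x hx y hy h
      cases i using Fin.lastCases with
      | last =>
        have hxy : x = y := funext fun j => h j (Fin.le_last _)
        rw [hxy]
      | cast i0 =>
        simp only [Fin.snoc_castSucc]
        exact hφpre.1 i0 _ (hinitIC x hx) _ (hinitIC y hy) fun j hj =>
          h j.castSucc (Fin.castSucc_le_castSucc_iff.2 hj)
    · -- precellular 2
      intro i x hx y hy h hlt'
      cases i using Fin.lastCases with
      | last =>
        have hxy : Fin.init x = Fin.init y :=
          funext fun j => h j.castSucc (Fin.castSucc_lt_last j)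
        simp only [Fin.snoc_last, hxy]
        have hfg' := hfg _ (hφC _ (hinitIC y hy))
        nlinarith [hlt']
      | cast i0 =>
        simp only [Fin.snoc_castSucc]
        exact hφpre.2 i0 _ (hinitIC x hx) _ (hinitIC y hy) (fun j hj =>
          h j.castSucc (Fin.castSucc_lt_castSucc_iff.2 hj)) hlt'
    · -- continuity
      rw [continuousOn_pi]
      intro i
      have hcinit : Continuous (fun x : Fin (ℓ + 1) → ℝ => Fin.init x) :=
        continuous_pi fun j => continuous_apply j.castSucc
      have h1 : ContinuousOn (fun x : Fin (ℓ + 1) → ℝ => φ (Fin.init x)) IC' :=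
        hφcont.comp hcinit.continuousOn fun x hx => hinitIC x hx
      have hmaps : ∀ x ∈ IC', φ (Fin.init x) ∈ C := fun x hx => hφC _ (hinitIC x hx)
      have hF : ContinuousOn (fun x : Fin (ℓ + 1) → ℝ => f (φ (Fin.init x))) IC' :=
        hf.comp h1 hmaps
      have hG : ContinuousOn (fun x : Fin (ℓ + 1) → ℝ => g (φ (Fin.init x))) IC' :=
        hg.comp h1 hmaps
      cases i using Fin.lastCases with
      | last =>
        simp only [Fin.snoc_last]
        exact hF.add ((hG.sub hF).mul
          (((continuous_apply (Fin.last ℓ)).sub continuous_const).continuousOn))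
      | cast i0 =>
        simp only [Fin.snoc_castSucc]
        exact (continuous_apply i0).comp_continuousOn h1
    · -- natural
      intro i x hx
      cases i using Fin.lastCases with
      | last =>
        refine ⟨g (φ (Fin.init x)) - f (φ (Fin.init x)),
          f (φ (Fin.init x)) - (g (φ (Fin.init x)) - f (φ (Fin.init x))) * m,
          fun z hz hagree => ?_⟩
        have hzx : Fin.init z = Fin.init x :=
          funext fun j => hagree j.castSucc (Fin.castSucc_lt_last j)
        simp only [Fin.snoc_last, hzx]
        ring
      | cast i0 =>
        obtain ⟨A, B, hAB⟩ := hφnat i0 (Fin.init x) (hinitIC x hx)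
        refine ⟨A, B, fun z hz hagree => ?_⟩
        simp only [Fin.snoc_castSucc]
        exact hAB (Fin.init z) (hinitIC z hz) fun j hj =>
          hagree j.castSucc (Fin.castSucc_lt_castSucc_iff.2 hj)
    · -- uniqueness
      rintro φ' ⟨him', hpre', hcont', hnat'⟩
      have hsnoc0 : ∀ z ∈ IC, Fin.snoc z ((m:ℝ) + 1/2) ∈ IC' := fun z hz => hsnoc z hz _ ht0
      have hagreecast : ∀ w ∈ IC', ∀ t ∈ Ioo (m:ℝ) ((m:ℝ)+1), ∀ j : Fin ℓ,
          φ' (Fin.snoc (Fin.init w) t) j.castSucc = φ' w j.castSucc := by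
        intro w hw t ht j
        refine hpre'.1 j.castSucc _ (hsnoc _ (hinitIC w hw) t ht) _ hw fun j' hj' => ?_
        obtain ⟨j1, rfl⟩ := lt_last_castSucc (lt_of_le_of_lt hj' (Fin.castSucc_lt_last j))
        rw [Fin.snoc_castSucc]
        rfl
      have hψgood : GoodMap C IC (fun z => Fin.init (φ' (Fin.snoc z ((m:ℝ) + 1/2)))) := by
        refine ⟨?_, ⟨?_, ?_⟩, ?_, ?_⟩
        · ext y
          simp only [mem_image]
          constructor
          · rintro ⟨z, hz, rfl⟩
            have h2 : φ' (Fin.snoc z ((m:ℝ)+1/2)) ∈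
                {x : Fin (ℓ+1) → ℝ | Fin.init x ∈ C ∧
                  f (Fin.init x) < x (Fin.last ℓ) ∧ x (Fin.last ℓ) < g (Fin.init x)} := by
              rw [← him']; exact mem_image_of_mem φ' (hsnoc0 z hz)
            exact h2.1
          · intro hy
            have hzC' : Fin.snoc y ((f y + g y)/2) ∈
                {x : Fin (ℓ+1) → ℝ | Fin.init x ∈ C ∧
                  f (Fin.init x) < x (Fin.last ℓ) ∧ x (Fin.last ℓ) < g (Fin.init x)} := by
              have := hfg y hy
              refine ⟨by rw [Fin.init_snoc]; exact hy, ?_, ?_⟩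
              · rw [Fin.snoc_last, Fin.init_snoc]; linarith
              · rw [Fin.snoc_last, Fin.init_snoc]; linarith
            rw [← him'] at hzC'
            obtain ⟨w, hw, hφw⟩ := hzC'
            refine ⟨Fin.init w, hinitIC w hw, ?_⟩
            show Fin.init (φ' (Fin.snoc (Fin.init w) ((m:ℝ)+1/2))) = y
            funext j
            show φ' (Fin.snoc (Fin.init w) ((m:ℝ)+1/2)) j.castSucc = y j
            rw [hagreecast w hw _ ht0 j, hφw, Fin.snoc_castSucc]
        · intro i x hx y hy h
          show φ' (Fin.snoc x ((m:ℝ)+1/2)) i.castSucc = φ' (Fin.snoc y ((m:ℝ)+1/2)) i.castSucc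
          refine hpre'.1 i.castSucc _ (hsnoc0 x hx) _ (hsnoc0 y hy) fun j hj => ?_
          obtain ⟨j1, rfl⟩ := lt_last_castSucc (lt_of_le_of_lt hj (Fin.castSucc_lt_last i))
          rw [Fin.snoc_castSucc, Fin.snoc_castSucc]
          exact h j1 (Fin.castSucc_le_castSucc_iff.1 hj)
        · intro i x hx y hy h hlt'
          show φ' (Fin.snoc x ((m:ℝ)+1/2)) i.castSucc < φ' (Fin.snoc y ((m:ℝ)+1/2)) i.castSucc
          refine hpre'.2 i.castSucc _ (hsnoc0 x hx) _ (hsnoc0 y hy) (fun j hj => ?_) ?_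
          · obtain ⟨j1, rfl⟩ := lt_last_castSucc (lt_trans hj (Fin.castSucc_lt_last i))
            rw [Fin.snoc_castSucc, Fin.snoc_castSucc]
            exact h j1 (Fin.castSucc_lt_castSucc_iff.1 hj)
          · rw [Fin.snoc_castSucc, Fin.snoc_castSucc]
            exact hlt'
        · have hcs : Continuous (fun z : Fin ℓ → ℝ => (Fin.snoc z ((m:ℝ)+1/2) : Fin (ℓ+1) → ℝ)) := by
            refine continuous_pi fun j => ?_
            cases j using Fin.lastCases with
            | last => simpa using continuous_const
            | cast i => simpa using continuous_apply i
          have h2 : ContinuousOn (fun z : Fin ℓ → ℝ => φ' (Fin.snoc z ((m:ℝ)+1/2))) IC :=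
            hcont'.comp hcs.continuousOn fun z hz => hsnoc0 z hz
          rw [continuousOn_pi]
          intro i
          exact (continuous_apply i.castSucc).comp_continuousOn h2
        · intro i x hx
          obtain ⟨A, B, hAB⟩ := hnat' i.castSucc (Fin.snoc x ((m:ℝ)+1/2)) (hsnoc0 x hx)
          refine ⟨A, B, fun z hz hagree => ?_⟩
          have hg2 : ∀ j, j < i.castSucc →
              (Fin.snoc z ((m:ℝ)+1/2) : Fin (ℓ+1) → ℝ) j = (Fin.snoc x ((m:ℝ)+1/2) : Fin (ℓ+1) → ℝ) j := by
            intro j hj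
            obtain ⟨j1, rfl⟩ := lt_last_castSucc (lt_trans hj (Fin.castSucc_lt_last i))
            rw [Fin.snoc_castSucc, Fin.snoc_castSucc]
            exact hagree j1 (Fin.castSucc_lt_castSucc_iff.1 hj)
          have h3 := hAB _ (hsnoc0 z hz) hg2
          show φ' (Fin.snoc z ((m:ℝ)+1/2)) i.castSucc = A * z i + B
          rw [h3, Fin.snoc_castSucc]
      have hEq := hφuniq _ hψgood
      intro p hp
      have hx := hinitIC p hp
      have htlast := hlast p hp
      have hEqp : φ (Fin.init p) = Fin.init (φ' (Fin.snoc (Fin.init p) ((m:ℝ)+1/2))) := hEq hx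
      have hYC : φ (Fin.init p) ∈ C := hφC _ hx
      have hfgY := hfg _ hYC
      -- the affine data in the last coordinate
      obtain ⟨A, B, hAB⟩ := hnat' (Fin.last ℓ) p hp
      have hagreep : ∀ t' ∈ Ioo (m:ℝ) ((m:ℝ)+1), ∀ j : Fin (ℓ+1), j < Fin.last ℓ →
          (Fin.snoc (Fin.init p) t' : Fin (ℓ+1) → ℝ) j = p j := by
        intro t' ht' j hj
        obtain ⟨j1, rfl⟩ := lt_last_castSucc hj
        rw [Fin.snoc_castSucc]
        rfl
      have hval : ∀ t' ∈ Ioo (m:ℝ) ((m:ℝ)+1),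
          φ' (Fin.snoc (Fin.init p) t') (Fin.last ℓ) = A * t' + B := by
        intro t' ht'
        have := hAB _ (hsnoc _ hx t' ht') (hagreep t' ht')
        rwa [Fin.snoc_last] at this
      have ht14 : (m:ℝ) + 1/4 ∈ Ioo (m:ℝ) ((m:ℝ)+1) := by constructor <;> norm_num
      have hApos : 0 < A := by
        have hinc := hpre'.2 (Fin.last ℓ) _ (hsnoc _ hx _ ht14) _ (hsnoc _ hx _ ht0)
          (fun j hj => by
            obtain ⟨j1, rfl⟩ := lt_last_castSucc hj
            rw [Fin.snoc_castSucc, Fin.snoc_castSucc])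
          (by rw [Fin.snoc_last, Fin.snoc_last]; norm_num)
        rw [hval _ ht14, hval _ ht0] at hinc
        nlinarith
      have hin : ∀ t' ∈ Ioo (m:ℝ) ((m:ℝ)+1),
          Fin.init (φ' (Fin.snoc (Fin.init p) t')) = φ (Fin.init p) := by
        intro t' ht'
        funext j
        show φ' (Fin.snoc (Fin.init p) t') j.castSucc = φ (Fin.init p) j
        have h1 : φ' (Fin.snoc (Fin.init p) t') j.castSucc
            = φ' (Fin.snoc (Fin.init p) ((m:ℝ)+1/2)) j.castSucc := by
          refine hpre'.1 j.castSucc _ (hsnoc _ hx _ ht') _ (hsnoc _ hx _ ht0) fun j' hj' => ?_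
          obtain ⟨j1, rfl⟩ := lt_last_castSucc (lt_of_le_of_lt hj' (Fin.castSucc_lt_last j))
          rw [Fin.snoc_castSucc, Fin.snoc_castSucc]
        rw [h1]
        exact (congrFun hEqp j).symm
      have himg : (fun t => A * t + B) '' Ioo (m:ℝ) ((m:ℝ)+1)
          = Ioo (f (φ (Fin.init p))) (g (φ (Fin.init p))) := by
        ext s
        constructor
        · rintro ⟨t', ht', rfl⟩
          have hC'mem : φ' (Fin.snoc (Fin.init p) t') ∈
              {x : Fin (ℓ+1) → ℝ | Fin.init x ∈ C ∧
                f (Fin.init x) < x (Fin.last ℓ) ∧ x (Fin.last ℓ) < g (Fin.init x)} := by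
            rw [← him']; exact mem_image_of_mem φ' (hsnoc _ hx t' ht')
          obtain ⟨hc1, hc2, hc3⟩ := hC'mem
          rw [hin t' ht'] at hc2 hc3
          rw [hval t' ht'] at hc2 hc3
          exact ⟨hc2, hc3⟩
        · intro hs
          have hz' : Fin.snoc (φ (Fin.init p)) s ∈
              {x : Fin (ℓ+1) → ℝ | Fin.init x ∈ C ∧
                f (Fin.init x) < x (Fin.last ℓ) ∧ x (Fin.last ℓ) < g (Fin.init x)} := by
            refine ⟨by rw [Fin.init_snoc]; exact hYC, ?_, ?_⟩
            · rw [Fin.snoc_last, Fin.init_snoc]; exact hs.1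
            · rw [Fin.snoc_last, Fin.init_snoc]; exact hs.2
          rw [← him'] at hz'
          obtain ⟨w, hw, hφw⟩ := hz'
          have h4 : φ (Fin.init w) = φ (Fin.init p) := by
            have e1 : φ (Fin.init w)
                = Fin.init (φ' (Fin.snoc (Fin.init w) ((m:ℝ)+1/2))) := hEq (hinitIC w hw)
            funext j
            rw [congrFun e1 j]
            show φ' (Fin.snoc (Fin.init w) ((m:ℝ)+1/2)) j.castSucc = φ (Fin.init p) j
            rw [hagreecast w hw _ ht0 j, hφw, Fin.snoc_castSucc]
          have hxw : Fin.init w = Fin.init p :=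
            precellular_inj hφpre.2 (hinitIC w hw) hx h4
          have hwlast := hlast w hw
          refine ⟨w (Fin.last ℓ), hwlast, ?_⟩
          show A * w (Fin.last ℓ) + B = s
          rw [← hval (w (Fin.last ℓ)) hwlast, ← hxw, Fin.snoc_init_self, hφw, Fin.snoc_last]
      obtain ⟨hA, hB⟩ := affine_coeffs hApos himg
      subst hA
      subst hB
      funext i
      cases i using Fin.lastCases with
      | cast i0 =>
        show (Fin.snoc (φ (Fin.init p)) (f (φ (Fin.init p)) + (g (φ (Fin.init p)) - f (φ (Fin.init p)))
          * (p (Fin.last ℓ) - m)) : Fin (ℓ+1) → ℝ) i0.castSucc = φ' p i0.castSucc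
        rw [Fin.snoc_castSucc, congrFun hEqp i0]
        show φ' (Fin.snoc (Fin.init p) ((m:ℝ)+1/2)) i0.castSucc = φ' p i0.castSucc
        exact hagreecast p hp _ ht0 i0
      | last =>
        show (Fin.snoc (φ (Fin.init p)) (f (φ (Fin.init p)) + (g (φ (Fin.init p)) - f (φ (Fin.init p)))
          * (p (Fin.last ℓ) - m)) : Fin (ℓ+1) → ℝ) (Fin.last ℓ) = φ' p (Fin.last ℓ)
        rw [Fin.snoc_last]
        have hplast : φ' p (Fin.last ℓ) = _ * p (Fin.last ℓ) + _ :=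
          hAB p hp (fun j hj => rfl)
        rw [hplast]
        ring

/-- For every cell `C` of length ℓ and every integer cell `𝒞` of the same type, there is a
unique surjective natural cellular map `A^{𝒞,C} : 𝒞 → C`. -/
theorem natural_cellular_map_exists_unique {ℓ : ℕ} (hl : 1 ≤ ℓ)
    (C : Set (Fin ℓ → ℝ)) (τ : Fin ℓ → Bool) (hC : IsCell ℓ C τ)
    (IC : Set (Fin ℓ → ℝ)) (hIC : CellTyped IC τ) :
    ∃ φ : (Fin ℓ → ℝ) → (Fin ℓ → ℝ),
      (φ '' IC = C ∧ Precellular IC φ ∧ ContinuousOn φ IC ∧ NaturalOn IC φ) ∧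
      ∀ φ' : (Fin ℓ → ℝ) → (Fin ℓ → ℝ),
        (φ' '' IC = C ∧ Precellular IC φ' ∧ ContinuousOn φ' IC ∧ NaturalOn IC φ') →
        Set.EqOn φ φ' IC := by
  obtain ⟨φ, hg, hu⟩ := main_aux hC IC hIC
  exact ⟨φ, ⟨hg.1, hg.2.1, hg.2.2.1, hg.2.2.2⟩, fun φ' h => hu φ' ⟨h.1, h.2.1, h.2.2.1, h.2.2.2⟩⟩

end Forts
end

section
/- (Analytic core of Gromov's reparametrization lemma.) For every integer r≥2 there exists a constant C_r>0, depending only on r, with the following property: for every C^r function f:(0,1)→(0,1) such that |f^{(j)}(x)|≤j! for all 0≤j≤r−1 and all x∈(0,1), and such that f^{(r)} is nonnegative and monotone (either nonincreasing or nondecreasing) on (0,1), the composition g(x) := f(3x²−2x³) satisfies |g^{(j)}(x)| ≤ C_r for all 0≤j≤r and all x∈(0,1). -/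
open Set

open Polynomial Finset

noncomputable def gromovDphi : Polynomial ℝ := C 6 * X - C 6 * X ^ 2

noncomputable def gromovP : ℕ → ℕ → Polynomial ℝ
  | 0, 0 => 1
  | 0, _ + 1 => 0
  | k + 1, 0 => derivative (gromovP k 0)
  | k + 1, i + 1 => derivative (gromovP k (i + 1)) + gromovDphi * gromovP k i

lemma gromovP_zero : ∀ k i, k < i → gromovP k i = 0 := by
  intro k
  induction k with
  | zero => intro i hi; match i, hi with | i + 1, _ => rfl
  | succ k ih =>
    intro i hi
    match i, hi with
    | i + 1, hi =>
      have h1 : gromovP k (i + 1) = 0 := ih _ (by omega)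
      have h2 : gromovP k i = 0 := ih _ (by omega)
      show derivative (gromovP k (i + 1)) + gromovDphi * gromovP k i = 0
      rw [h1, h2]; simp

lemma gromovP_diag : ∀ k, gromovP k k = gromovDphi ^ k := by
  intro k
  induction k with
  | zero => rfl
  | succ k ih =>
    show derivative (gromovP k (k + 1)) + gromovDphi * gromovP k k = _
    rw [gromovP_zero k (k + 1) (by omega), ih]
    simp [pow_succ]; ring

lemma hasDerivAt_iter {n i : ℕ} {f : ℝ → ℝ} (hf : ContDiffOn ℝ n f (Set.Ioo 0 1)) (hi : i < n)
    {x : ℝ} (hx : x ∈ Set.Ioo (0:ℝ) 1) :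
    HasDerivAt (iteratedDeriv i f) (iteratedDeriv (i + 1) f x) x := by
  have hs : IsOpen (Set.Ioo (0:ℝ) 1) := isOpen_Ioo
  have heqon : ∀ y ∈ Set.Ioo (0:ℝ) 1, iteratedDerivWithin i f (Set.Ioo 0 1) y = iteratedDeriv i f y := by
    intro y hy
    rw [iteratedDerivWithin_eq_iteratedFDerivWithin, iteratedDeriv_eq_iteratedFDeriv,
      iteratedFDerivWithin_of_isOpen i hs hy]
  have hdiff : DifferentiableOn ℝ (iteratedDerivWithin i f (Set.Ioo 0 1)) (Set.Ioo 0 1) :=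
    hf.differentiableOn_iteratedDerivWithin (by exact_mod_cast hi) hs.uniqueDiffOn
  have h1 : DifferentiableAt ℝ (iteratedDerivWithin i f (Set.Ioo 0 1)) x :=
    (hdiff x hx).differentiableAt (hs.mem_nhds hx)
  have hev : iteratedDerivWithin i f (Set.Ioo 0 1) =ᶠ[nhds x] iteratedDeriv i f :=
    Filter.eventuallyEq_of_mem (hs.mem_nhds hx) heqon
  have h2 : DifferentiableAt ℝ (iteratedDeriv i f) x := h1.congr_of_eventuallyEq hev.symm
  have := h2.hasDerivAt
  rwa [show deriv (iteratedDeriv i f) x = iteratedDeriv (i + 1) f x by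
    rw [iteratedDeriv_succ]] at this

lemma phi_mem {x : ℝ} (hx : x ∈ Set.Ioo (0:ℝ) 1) : (3 * x ^ 2 - 2 * x ^ 3) ∈ Set.Ioo (0:ℝ) 1 := by
  obtain ⟨h0, h1⟩ := hx
  constructor <;> nlinarith [sq_nonneg x, sq_nonneg (1 - x), mul_pos h0 h0]

lemma hasDerivAt_phi (x : ℝ) :
    HasDerivAt (fun t : ℝ => 3 * t ^ 2 - 2 * t ^ 3) (gromovDphi.eval x) x := by
  have h := ((hasDerivAt_pow 2 x).const_mul (3:ℝ)).fun_sub ((hasDerivAt_pow 3 x).const_mul (2:ℝ))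
  refine h.congr_deriv ?_
  simp [gromovDphi]; ring

lemma gromov_formula {r : ℕ} {f : ℝ → ℝ} (hf : ContDiffOn ℝ r f (Set.Ioo 0 1)) :
    ∀ k ≤ r, ∀ x ∈ Set.Ioo (0:ℝ) 1,
      iteratedDeriv k (fun t => f (3 * t ^ 2 - 2 * t ^ 3)) x =
        ∑ i ∈ Finset.range (k + 1),
          iteratedDeriv i f (3 * x ^ 2 - 2 * x ^ 3) * (gromovP k i).eval x := by
  intro k
  induction k with
  | zero =>
    intro _ x hx
    simp [gromovP]
  | succ k ih =>
    intro hk x hx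
    have hk' : k ≤ r := by omega
    have hs : IsOpen (Set.Ioo (0:ℝ) 1) := isOpen_Ioo
    -- derivative of the sum
    have hterm : ∀ i ∈ Finset.range (k + 1),
        HasDerivAt (fun y => iteratedDeriv i f (3 * y ^ 2 - 2 * y ^ 3) * (gromovP k i).eval y)
          (iteratedDeriv (i + 1) f (3 * x ^ 2 - 2 * x ^ 3) * gromovDphi.eval x
              * (gromovP k i).eval x
            + iteratedDeriv i f (3 * x ^ 2 - 2 * x ^ 3)
              * (derivative (gromovP k i)).eval x) x := by
      intro i hi
      have hiR : i < r := by simp [Finset.mem_range] at hi; omega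
      have h1 : HasDerivAt (fun y => iteratedDeriv i f (3 * y ^ 2 - 2 * y ^ 3))
          (iteratedDeriv (i + 1) f (3 * x ^ 2 - 2 * x ^ 3) * gromovDphi.eval x) x := by
        have := (hasDerivAt_iter hf hiR (phi_mem hx)).comp x (hasDerivAt_phi x)
        simpa [Function.comp_def] using this
      exact h1.mul ((gromovP k i).hasDerivAt x)
    have hsum : HasDerivAt (fun y => ∑ i ∈ Finset.range (k + 1),
          iteratedDeriv i f (3 * y ^ 2 - 2 * y ^ 3) * (gromovP k i).eval y)
        (∑ i ∈ Finset.range (k + 1),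
          (iteratedDeriv (i + 1) f (3 * x ^ 2 - 2 * x ^ 3) * gromovDphi.eval x
              * (gromovP k i).eval x
            + iteratedDeriv i f (3 * x ^ 2 - 2 * x ^ 3)
              * (derivative (gromovP k i)).eval x)) x := HasDerivAt.fun_sum hterm
    have hev : iteratedDeriv k (fun t => f (3 * t ^ 2 - 2 * t ^ 3)) =ᶠ[nhds x]
        (fun y => ∑ i ∈ Finset.range (k + 1),
          iteratedDeriv i f (3 * y ^ 2 - 2 * y ^ 3) * (gromovP k i).eval y) :=
      Filter.eventuallyEq_of_mem (hs.mem_nhds hx) (fun y hy => ih hk' y hy)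
    rw [iteratedDeriv_succ, hev.deriv_eq, hsum.deriv]
    -- now the algebraic rearrangement
    rw [Finset.sum_add_distrib]
    rw [Finset.sum_range_succ' (fun i => iteratedDeriv i f (3 * x ^ 2 - 2 * x ^ 3)
      * (gromovP (k + 1) i).eval x) (k + 1)]
    have hP0 : gromovP (k + 1) 0 = derivative (gromovP k 0) := rfl
    have hPS : ∀ i, gromovP (k + 1) (i + 1)
        = derivative (gromovP k (i + 1)) + gromovDphi * gromovP k i := fun i => rfl
    rw [Finset.sum_range_succ' (fun i => iteratedDeriv i f (3 * x ^ 2 - 2 * x ^ 3)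
      * (derivative (gromovP k i)).eval x) k]
    have htop : ∑ i ∈ Finset.range (k + 1), iteratedDeriv (i + 1) f (3 * x ^ 2 - 2 * x ^ 3)
        * (gromovP (k + 1) (i + 1)).eval x
        = (∑ i ∈ Finset.range k, iteratedDeriv (i + 1) f (3 * x ^ 2 - 2 * x ^ 3)
            * (derivative (gromovP k (i + 1))).eval x)
          + ∑ i ∈ Finset.range (k + 1), iteratedDeriv (i + 1) f (3 * x ^ 2 - 2 * x ^ 3)
            * gromovDphi.eval x * (gromovP k i).eval x := by
      have : ∀ i ∈ Finset.range (k + 1), iteratedDeriv (i + 1) f (3 * x ^ 2 - 2 * x ^ 3)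
          * (gromovP (k + 1) (i + 1)).eval x
          = iteratedDeriv (i + 1) f (3 * x ^ 2 - 2 * x ^ 3)
              * (derivative (gromovP k (i + 1))).eval x
            + iteratedDeriv (i + 1) f (3 * x ^ 2 - 2 * x ^ 3)
              * gromovDphi.eval x * (gromovP k i).eval x := by
        intro i _
        rw [hPS i]; simp [eval_add, eval_mul]; ring
      rw [Finset.sum_congr rfl this, Finset.sum_add_distrib]
      congr 1
      rw [Finset.sum_range_succ]
      rw [gromovP_zero k (k + 1) (by omega)]
      simp
    rw [htop, hP0]
    ring

lemma gromov_top_left {r : ℕ} (hr : 2 ≤ r) {f : ℝ → ℝ}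
    (hf : ContDiffOn ℝ r f (Set.Ioo 0 1))
    (hF : ∀ x ∈ Set.Ioo (0:ℝ) 1, |iteratedDeriv (r-1) f x| ≤ (Nat.factorial (r-1) : ℝ))
    (hmono : ∀ x ∈ Set.Ioo (0:ℝ) 1, ∀ y ∈ Set.Ioo (0:ℝ) 1, x ≤ y →
      iteratedDeriv r f y ≤ iteratedDeriv r f x)
    {t : ℝ} (ht : t ∈ Set.Ioo (0:ℝ) 1) :
    iteratedDeriv r f t ≤ 4 * (Nat.factorial (r-1) : ℝ) / t := by
  obtain ⟨ht0, ht1⟩ := ht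
  set D := (Nat.factorial (r-1) : ℝ) with hD
  have hD0 : (0:ℝ) ≤ D := Nat.cast_nonneg _
  have hab : t / 2 < t := by linarith
  have hsub : Icc (t/2) t ⊆ Set.Ioo (0:ℝ) 1 := fun y hy => ⟨by linarith [hy.1], by
    have := hy.2; linarith⟩
  have hd : ∀ y ∈ Set.Ioo (t/2) t, HasDerivAt (iteratedDeriv (r-1) f) (iteratedDeriv r f y) y := by
    intro y hy
    have h := hasDerivAt_iter hf (show r - 1 < r by omega)
      (hsub ⟨le_of_lt hy.1, le_of_lt hy.2⟩)
    rwa [show r - 1 + 1 = r by omega] at h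
  have hcont : ContinuousOn (iteratedDeriv (r-1) f) (Icc (t/2) t) := by
    intro y hy
    have h := hasDerivAt_iter hf (show r - 1 < r by omega) (hsub hy)
    exact h.continuousAt.continuousWithinAt
  obtain ⟨c, hc, hceq⟩ := exists_hasDerivAt_eq_slope (iteratedDeriv (r-1) f)
    (iteratedDeriv r f) hab hcont hd
  have hc' : c ∈ Set.Ioo (0:ℝ) 1 := hsub ⟨le_of_lt hc.1, le_of_lt hc.2⟩
  have h1 : iteratedDeriv r f t ≤ iteratedDeriv r f c :=
    hmono c hc' t ⟨ht0, ht1⟩ (le_of_lt hc.2)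
  have h2 := abs_le.mp (hF t ⟨ht0, ht1⟩)
  have h3 := abs_le.mp (hF (t/2) ⟨by linarith, by linarith⟩)
  calc iteratedDeriv r f t ≤ iteratedDeriv r f c := h1
    _ = (iteratedDeriv (r-1) f t - iteratedDeriv (r-1) f (t/2)) / (t - t/2) := hceq
    _ ≤ 4 * D / t := by
        rw [div_le_div_iff₀ (by linarith) ht0]
        nlinarith [h2.1, h2.2, h3.1, h3.2]

lemma gromov_top_right {r : ℕ} (hr : 2 ≤ r) {f : ℝ → ℝ}
    (hf : ContDiffOn ℝ r f (Set.Ioo 0 1))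
    (hF : ∀ x ∈ Set.Ioo (0:ℝ) 1, |iteratedDeriv (r-1) f x| ≤ (Nat.factorial (r-1) : ℝ))
    (hmono : ∀ x ∈ Set.Ioo (0:ℝ) 1, ∀ y ∈ Set.Ioo (0:ℝ) 1, x ≤ y →
      iteratedDeriv r f x ≤ iteratedDeriv r f y)
    {t : ℝ} (ht : t ∈ Set.Ioo (0:ℝ) 1) :
    iteratedDeriv r f t ≤ 4 * (Nat.factorial (r-1) : ℝ) / (1 - t) := by
  obtain ⟨ht0, ht1⟩ := ht
  set D := (Nat.factorial (r-1) : ℝ) with hD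
  have hD0 : (0:ℝ) ≤ D := Nat.cast_nonneg _
  have hab : t < (t + 1) / 2 := by linarith
  have hsub : Icc t ((t+1)/2) ⊆ Set.Ioo (0:ℝ) 1 := fun y hy => ⟨by linarith [hy.1], by
    have := hy.2; linarith⟩
  have hd : ∀ y ∈ Set.Ioo t ((t+1)/2),
      HasDerivAt (iteratedDeriv (r-1) f) (iteratedDeriv r f y) y := by
    intro y hy
    have h := hasDerivAt_iter hf (show r - 1 < r by omega)
      (hsub ⟨le_of_lt hy.1, le_of_lt hy.2⟩)
    rwa [show r - 1 + 1 = r by omega] at h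
  have hcont : ContinuousOn (iteratedDeriv (r-1) f) (Icc t ((t+1)/2)) := by
    intro y hy
    have h := hasDerivAt_iter hf (show r - 1 < r by omega) (hsub hy)
    exact h.continuousAt.continuousWithinAt
  obtain ⟨c, hc, hceq⟩ := exists_hasDerivAt_eq_slope (iteratedDeriv (r-1) f)
    (iteratedDeriv r f) hab hcont hd
  have hc' : c ∈ Set.Ioo (0:ℝ) 1 := hsub ⟨le_of_lt hc.1, le_of_lt hc.2⟩
  have h1 : iteratedDeriv r f t ≤ iteratedDeriv r f c :=
    hmono t ⟨ht0, ht1⟩ c hc' (le_of_lt hc.1)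
  have h2 := abs_le.mp (hF t ⟨ht0, ht1⟩)
  have h3 := abs_le.mp (hF ((t+1)/2) ⟨by linarith, by linarith⟩)
  calc iteratedDeriv r f t ≤ iteratedDeriv r f c := h1
    _ = (iteratedDeriv (r-1) f ((t+1)/2) - iteratedDeriv (r-1) f t) / ((t+1)/2 - t) := hceq
    _ ≤ 4 * D / (1 - t) := by
        rw [div_le_div_iff₀ (by linarith) (by linarith)]
        nlinarith [h2.1, h2.2, h3.1, h3.2]

lemma gromov_poly_bound (r : ℕ) : ∃ M : ℝ, 1 ≤ M ∧
    ∀ x ∈ Set.Icc (0:ℝ) 1, ∀ k ≤ r, ∀ i ≤ r, |(gromovP k i).eval x| ≤ M := by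
  set G : ℝ → ℝ := fun x => ∑ k ∈ Finset.range (r+1), ∑ i ∈ Finset.range (r+1),
    |(gromovP k i).eval x| with hG
  have hGc : ContinuousOn G (Set.Icc (0:ℝ) 1) := by
    apply Continuous.continuousOn
    apply continuous_finset_sum
    intro k _
    apply continuous_finset_sum
    intro i _
    exact ((gromovP k i).continuous).abs
  obtain ⟨M0, hM0⟩ := isCompact_Icc.exists_bound_of_continuousOn hGc
  refine ⟨max M0 1, le_max_right _ _, ?_⟩
  intro x hx k hk i hi
  have h1 : |(gromovP k i).eval x| ≤ ∑ j ∈ Finset.range (r+1), |(gromovP k j).eval x| :=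
    Finset.single_le_sum (f := fun j => |(gromovP k j).eval x|)
      (fun j _ => abs_nonneg _) (Finset.mem_range.mpr (by omega))
  have h2 : (∑ j ∈ Finset.range (r+1), |(gromovP k j).eval x|) ≤ G x :=
    Finset.single_le_sum (f := fun k => ∑ i ∈ Finset.range (r+1), |(gromovP k i).eval x|)
      (fun j _ => Finset.sum_nonneg fun _ _ => abs_nonneg _) (Finset.mem_range.mpr (by omega))
  have h3 : G x ≤ M0 := le_trans (le_abs_self _) (hM0 x hx)
  exact le_trans h1 (le_trans h2 (le_trans h3 (le_max_left _ _)))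

/-- Analytic core of Gromov's reparametrization lemma: for every `r ≥ 2` there is `C_r > 0`
such that for every `C^r` function `f : (0,1) → (0,1)` with `|f^{(j)}| ≤ j!` for all
`j ≤ r - 1`, whose `r`-th derivative is nonnegative and monotone on `(0,1)`, the composition
`g(x) = f(3x² - 2x³)` satisfies `|g^{(j)}(x)| ≤ C_r` for all `j ≤ r` and `x ∈ (0,1)`. -/
theorem gromov_reparametrization_core (r : ℕ) (hr : 2 ≤ r) :
    ∃ C : ℝ, 0 < C ∧
      ∀ f : ℝ → ℝ, ContDiffOn ℝ r f (Set.Ioo 0 1) →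
        (∀ x ∈ Set.Ioo (0 : ℝ) 1, f x ∈ Set.Ioo (0 : ℝ) 1) →
        (∀ j ≤ r - 1, ∀ x ∈ Set.Ioo (0 : ℝ) 1,
          |iteratedDeriv j f x| ≤ (Nat.factorial j : ℝ)) →
        (∀ x ∈ Set.Ioo (0 : ℝ) 1, 0 ≤ iteratedDeriv r f x) →
        ((∀ x ∈ Set.Ioo (0 : ℝ) 1, ∀ y ∈ Set.Ioo (0 : ℝ) 1, x ≤ y →
            iteratedDeriv r f y ≤ iteratedDeriv r f x) ∨
          (∀ x ∈ Set.Ioo (0 : ℝ) 1, ∀ y ∈ Set.Ioo (0 : ℝ) 1, x ≤ y →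
            iteratedDeriv r f x ≤ iteratedDeriv r f y)) →
        ∀ j ≤ r, ∀ x ∈ Set.Ioo (0 : ℝ) 1,
          |iteratedDeriv j (fun t => f (3 * t ^ 2 - 2 * t ^ 3)) x| ≤ C := by
  obtain ⟨M, hM1, hM⟩ := gromov_poly_bound r
  set Rf := (Nat.factorial r : ℝ) with hRf
  set Dr := (Nat.factorial (r-1) : ℝ) with hDr
  have hRf1 : (1:ℝ) ≤ Rf := by
    rw [hRf]; exact_mod_cast Nat.one_le_iff_ne_zero.mpr (Nat.factorial_ne_zero r)
  have hDr0 : (0:ℝ) ≤ Dr := Nat.cast_nonneg _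
  refine ⟨((r:ℝ) + 1) * Rf * M + 4 * Dr * 6 ^ r, by positivity, ?_⟩
  intro f hf hmem hFb hpos hmono j hj x hx
  have hxI : x ∈ Set.Icc (0:ℝ) 1 := ⟨le_of_lt hx.1, le_of_lt hx.2⟩
  have hterm_bound : ∀ i, i ≤ r - 1 → i ≤ r → ∀ k ≤ r,
      |iteratedDeriv i f (3 * x ^ 2 - 2 * x ^ 3) * (gromovP k i).eval x| ≤ Rf * M := by
    intro i hi1 hi2 k hk
    rw [abs_mul]
    have h1 : |iteratedDeriv i f (3 * x ^ 2 - 2 * x ^ 3)| ≤ (Nat.factorial i : ℝ) :=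
      hFb i hi1 _ (phi_mem hx)
    have h2 : (Nat.factorial i : ℝ) ≤ Rf := by
      rw [hRf]; exact_mod_cast Nat.factorial_le hi2
    have h3 := hM x hxI k hk i hi2
    exact mul_le_mul (le_trans h1 h2) h3 (abs_nonneg _) (by linarith)
  rcases lt_or_eq_of_le hj with hjlt | hjeq
  · -- j < r : all derivatives of f involved are bounded
    rw [gromov_formula hf j hj x hx]
    have h4 : |∑ i ∈ Finset.range (j + 1),
        iteratedDeriv i f (3 * x ^ 2 - 2 * x ^ 3) * (gromovP j i).eval x|
        ≤ ∑ i ∈ Finset.range (j + 1), (Rf * M) := by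
      refine le_trans (Finset.abs_sum_le_sum_abs _ _) (Finset.sum_le_sum ?_)
      intro i hi
      have hi' : i ≤ j := by simp [Finset.mem_range] at hi; omega
      exact hterm_bound i (by omega) (by omega) j hj
    rw [Finset.sum_const, Finset.card_range, nsmul_eq_mul] at h4
    have h5 : ((j:ℝ) + 1) * (Rf * M) ≤ ((r:ℝ) + 1) * Rf * M := by
      have hjr : ((j:ℝ) + 1) ≤ (r:ℝ) + 1 := by
        have : (j:ℝ) ≤ (r:ℝ) := by exact_mod_cast hj
        linarith
      nlinarith [mul_nonneg (le_trans zero_le_one hRf1) (le_trans zero_le_one hM1)]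
    have h6 : (0:ℝ) ≤ 4 * Dr * 6 ^ r := by positivity
    push_cast at h4
    linarith
  · -- j = r : split off the top term
    subst hjeq
    rw [gromov_formula hf j le_rfl x hx, Finset.sum_range_succ]
    refine le_trans (abs_add_le _ _) ?_
    have h4 : |∑ i ∈ Finset.range j,
        iteratedDeriv i f (3 * x ^ 2 - 2 * x ^ 3) * (gromovP j i).eval x|
        ≤ ∑ i ∈ Finset.range j, (Rf * M) := by
      refine le_trans (Finset.abs_sum_le_sum_abs _ _) (Finset.sum_le_sum ?_)
      intro i hi
      have hi' : i < j := Finset.mem_range.mp hi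
      exact hterm_bound i (by omega) (by omega) j le_rfl
    rw [Finset.sum_const, Finset.card_range, nsmul_eq_mul] at h4
    -- top term
    set φ := 3 * x ^ 2 - 2 * x ^ 3 with hφdef
    have hφ : φ ∈ Set.Ioo (0:ℝ) 1 := phi_mem hx
    have hfr0 : 0 ≤ iteratedDeriv j f φ := hpos φ hφ
    set d := gromovDphi.eval x with hd
    have hdval : d = 6 * x - 6 * x ^ 2 := by simp [hd, gromovDphi]
    have hx0 := hx.1; have hx1 := hx.2
    have hd0 : 0 ≤ d := by rw [hdval]; nlinarith
    have htop_eq : |iteratedDeriv j f φ * (gromovP j j).eval x|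
        = iteratedDeriv j f φ * d ^ j := by
      rw [gromovP_diag, eval_pow, ← hd,
        abs_of_nonneg (mul_nonneg hfr0 (pow_nonneg hd0 j))]
    have htop : iteratedDeriv j f φ * d ^ j ≤ 4 * Dr * 6 ^ j := by
      rcases hmono with hm | hm
      · have ha : iteratedDeriv j f φ ≤ 4 * Dr / φ :=
          gromov_top_left hr hf (fun y hy => hFb (j-1) le_rfl y hy) hm hφ
        have hφ0 : (0:ℝ) < φ := hφ.1
        have hb : d ^ j ≤ 6 ^ j * φ := by
          have h6 : d ≤ 6 * x := by rw [hdval]; nlinarith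
          have hb1 : d ^ j ≤ (6 * x) ^ j := pow_le_pow_left₀ hd0 h6 j
          have hb2 : (6 * x) ^ j = 6 ^ j * x ^ j := mul_pow 6 x j
          have hb3 : x ^ j ≤ x ^ 2 := pow_le_pow_of_le_one (le_of_lt hx0) (le_of_lt hx1) hr
          have hb4 : x ^ 2 ≤ φ := by rw [hφdef]; nlinarith
          calc d ^ j ≤ 6 ^ j * x ^ j := by rw [← hb2]; exact hb1
            _ ≤ 6 ^ j * φ :=
                mul_le_mul_of_nonneg_left (le_trans hb3 hb4) (by positivity)
        calc iteratedDeriv j f φ * d ^ j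
            ≤ (4 * Dr / φ) * d ^ j := mul_le_mul_of_nonneg_right ha (pow_nonneg hd0 j)
          _ ≤ (4 * Dr / φ) * (6 ^ j * φ) := by
              apply mul_le_mul_of_nonneg_left hb
              positivity
          _ = 4 * Dr * 6 ^ j := by field_simp
      · have ha : iteratedDeriv j f φ ≤ 4 * Dr / (1 - φ) :=
          gromov_top_right hr hf (fun y hy => hFb (j-1) le_rfl y hy) hm hφ
        have hφ1 : φ < 1 := hφ.2
        have hφ1' : (0:ℝ) < 1 - φ := by linarith
        have hb : d ^ j ≤ 6 ^ j * (1 - φ) := by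
          have h6 : d ≤ 6 * (1 - x) := by rw [hdval]; nlinarith
          have hb1 : d ^ j ≤ (6 * (1 - x)) ^ j := pow_le_pow_left₀ hd0 h6 j
          have hb2 : (6 * (1 - x)) ^ j = 6 ^ j * (1 - x) ^ j := mul_pow 6 (1 - x) j
          have hb3 : (1 - x) ^ j ≤ (1 - x) ^ 2 :=
            pow_le_pow_of_le_one (by linarith) (by linarith) hr
          have hb4 : (1 - x) ^ 2 ≤ 1 - φ := by rw [hφdef]; nlinarith
          calc d ^ j ≤ 6 ^ j * (1 - x) ^ j := by rw [← hb2]; exact hb1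
            _ ≤ 6 ^ j * (1 - φ) :=
                mul_le_mul_of_nonneg_left (le_trans hb3 hb4) (by positivity)
        calc iteratedDeriv j f φ * d ^ j
            ≤ (4 * Dr / (1 - φ)) * d ^ j := mul_le_mul_of_nonneg_right ha (pow_nonneg hd0 j)
          _ ≤ (4 * Dr / (1 - φ)) * (6 ^ j * (1 - φ)) := by
              apply mul_le_mul_of_nonneg_left hb
              positivity
          _ = 4 * Dr * 6 ^ j := by field_simp
    have h5 : (j:ℝ) * (Rf * M) ≤ ((j:ℝ) + 1) * Rf * M := by
      nlinarith [mul_nonneg (le_trans zero_le_one hRf1) (le_trans zero_le_one hM1)]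
    linarith [htop_eq ▸ htop]
end

section
/- Let ℓ≥2 and L>0, and let f: (0,1)^ℓ→ℝ be a function such that for every t∈(0,1) the function y↦f(t,y) is L-Lipschitz on (0,1)^{ℓ−1}. Then for every t∈(0,1), the set {y∈(0,1)^{ℓ−1} : f is discontinuous at (t,y)} is open in (0,1)^{ℓ−1}. More precisely, if x∈(0,1)^ℓ satisfies limsup_{z→x}|f(z)−f(x)| = ε > 0, then every point x′∈(0,1)^ℓ with the same first coordinate as x and with |x−x′| < ε/(4L) satisfies limsup_{z→x′}|f(z)−f(x′)| ≥ ε/2. -/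
open Set

/-- The open unit cube `(0,1)^ℓ`. -/
def unitCube (ℓ : ℕ) : Set (Fin ℓ → ℝ) := {x | ∀ i, x i ∈ Set.Ioo (0 : ℝ) 1}

lemma isOpen_unitCube (ℓ : ℕ) : IsOpen (unitCube ℓ) := by
  have h : unitCube ℓ = Set.pi Set.univ (fun _ => Set.Ioo (0:ℝ) 1) := by
    ext x; simp [unitCube, Set.mem_pi]
  rw [h]
  exact isOpen_set_pi Set.finite_univ (fun i _ => isOpen_Ioo)

lemma shift_dist (ℓ : ℕ) (x x' z : Fin ℓ → ℝ) :
    dist (z + (x' - x)) x' = dist z x ∧ dist (z + (x' - x)) z = dist x' x := by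
  constructor
  · rw [dist_eq_norm, dist_eq_norm]
    congr 1; ext i; simp [Pi.add_apply, Pi.sub_apply]; ring
  · rw [dist_eq_norm, dist_eq_norm]
    congr 1; ext i; simp [Pi.add_apply, Pi.sub_apply]

lemma shift_est (ℓ : ℕ) (hℓ : 2 ≤ ℓ) (L : ℝ) (f : (Fin ℓ → ℝ) → ℝ)
    (hlip : ∀ x ∈ unitCube ℓ, ∀ y ∈ unitCube ℓ,
      x (⟨0, Nat.lt_of_lt_of_le (Nat.succ_pos 1) hℓ⟩ : Fin ℓ) = y (⟨0, Nat.lt_of_lt_of_le (Nat.succ_pos 1) hℓ⟩ : Fin ℓ) →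
      |f x - f y| ≤ L * dist x y)
    (x x' z : Fin ℓ → ℝ) (hx : x ∈ unitCube ℓ) (hx' : x' ∈ unitCube ℓ)
    (hz : z ∈ unitCube ℓ) (hz' : z + (x' - x) ∈ unitCube ℓ)
    (h0 : x' (⟨0, Nat.lt_of_lt_of_le (Nat.succ_pos 1) hℓ⟩ : Fin ℓ) = x (⟨0, Nat.lt_of_lt_of_le (Nat.succ_pos 1) hℓ⟩ : Fin ℓ)) :
    |f z - f x| - 2 * L * dist x x' ≤ |f (z + (x' - x)) - f x'| := by
  set i0 : Fin ℓ := ⟨0, Nat.lt_of_lt_of_le (Nat.succ_pos 1) hℓ⟩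
  have h1 : |f z - f (z + (x' - x))| ≤ L * dist x x' := by
    have := hlip z hz (z + (x' - x)) hz' (by simp [Pi.add_apply, Pi.sub_apply, h0])
    rw [dist_comm z (z + (x' - x)), (shift_dist ℓ x x' z).2, dist_comm x' x] at this
    exact this
  have h2 : |f x' - f x| ≤ L * dist x x' := by
    have := hlip x' hx' x hx h0
    rwa [dist_comm x' x] at this
  have htri : |f z - f x| ≤ |f z - f (z + (x' - x))| + |f (z + (x' - x)) - f x'| + |f x' - f x| := by
    calc |f z - f x| ≤ |f z - f (z + (x' - x))| + |f (z + (x' - x)) - f x| :=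
          abs_sub_le _ _ _
      _ ≤ |f z - f (z + (x' - x))| + (|f (z + (x' - x)) - f x'| + |f x' - f x|) := by
          gcongr; exact abs_sub_le _ _ _
      _ = _ := by ring
  linarith

/-- If `f : (0,1)^ℓ → ℝ` is `L`-Lipschitz in the last `ℓ - 1` variables for every fixed
value of the first variable, then for every `t` the set of discontinuity points of `f` in
the fiber `{x₁ = t}` is open in the fiber; quantitatively, if the oscillation
`limsup_{z→x} |f(z) - f(x)|` equals `ε > 0` at `x`, then every `x'` in the same fiber with
`|x - x'| < ε/(4L)` has oscillation at least `ε/2`. -/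
theorem lipschitz_fiber_discontinuity_open (ℓ : ℕ) (hℓ : 2 ≤ ℓ) (L : ℝ) (hL : 0 < L)
    (f : (Fin ℓ → ℝ) → ℝ)
    (hlip : ∀ x ∈ unitCube ℓ, ∀ y ∈ unitCube ℓ,
      x (⟨0, by omega⟩ : Fin ℓ) = y (⟨0, by omega⟩ : Fin ℓ) →
      |f x - f y| ≤ L * dist x y) :
    (∀ x ∈ unitCube ℓ, ¬ContinuousWithinAt f (unitCube ℓ) x →
      ∃ η > 0, ∀ x' ∈ unitCube ℓ, x' (⟨0, by omega⟩ : Fin ℓ) = x (⟨0, by omega⟩ : Fin ℓ) →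
        dist x' x < η → ¬ContinuousWithinAt f (unitCube ℓ) x') ∧
    ∀ x ∈ unitCube ℓ, ∀ ε : ℝ, 0 < ε →
      (∀ δ > 0, ∀ η > 0, ∃ z ∈ unitCube ℓ, dist z x < η ∧ ε - δ < |f z - f x|) →
      (∀ δ > 0, ∃ η > 0, ∀ z ∈ unitCube ℓ, dist z x < η → |f z - f x| < ε + δ) →
      ∀ x' ∈ unitCube ℓ, x' (⟨0, by omega⟩ : Fin ℓ) = x (⟨0, by omega⟩ : Fin ℓ) →
        dist x x' < ε / (4 * L) →
        ∀ δ > 0, ∀ η > 0, ∃ z ∈ unitCube ℓ, dist z x' < η ∧ ε / 2 - δ < |f z - f x'| := by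
  constructor
  · -- qualitative part
    intro x hx hdisc
    rw [Metric.continuousWithinAt_iff] at hdisc
    push_neg at hdisc
    obtain ⟨ε, hε, hstep⟩ := hdisc
    refine ⟨ε / (4 * L), by positivity, ?_⟩
    intro x' hx' h0 hdx' hcont
    -- x' is interior
    obtain ⟨r, hr, hball⟩ := Metric.isOpen_iff.1 (isOpen_unitCube ℓ) x' hx'
    have hd : dist x x' < ε / (4 * L) := by rwa [dist_comm] at hdx'
    have hεd : 0 < ε - 2 * L * dist x x' := by
      have : 2 * L * dist x x' < 2 * L * (ε / (4 * L)) := by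
        apply mul_lt_mul_of_pos_left hd (by positivity)
      have h2 : 2 * L * (ε / (4 * L)) = ε / 2 := by field_simp; ring
      linarith
    rw [Metric.continuousWithinAt_iff] at hcont
    obtain ⟨δ, hδ, hclose⟩ := hcont (ε - 2 * L * dist x x') hεd
    obtain ⟨z, hz, hzd, hzf⟩ := hstep (min δ r) (lt_min hδ hr)
    set z' := z + (x' - x) with hz'def
    have hzz : dist z' x' = dist z x := (shift_dist ℓ x x' z).1
    have hz'mem : z' ∈ unitCube ℓ := by
      apply hball
      rw [Metric.mem_ball, hzz]
      exact lt_of_lt_of_le hzd (min_le_right _ _)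
    have hest := shift_est ℓ hℓ L f hlip x x' z hx hx' hz hz'mem h0
    have hcl := hclose hz'mem (by rw [hzz]; exact lt_of_lt_of_le hzd (min_le_left _ _))
    rw [Real.dist_eq] at hcl hzf
    linarith
  · -- quantitative part
    intro x hx ε hε hlow _hup x' hx' h0 hd δ hδ η hη
    obtain ⟨r, hr, hball⟩ := Metric.isOpen_iff.1 (isOpen_unitCube ℓ) x' hx'
    obtain ⟨z, hz, hzd, hzf⟩ := hlow δ hδ (min η r) (lt_min hη hr)
    set z' := z + (x' - x) with hz'def
    have hzz : dist z' x' = dist z x := (shift_dist ℓ x x' z).1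
    have hz'mem : z' ∈ unitCube ℓ := by
      apply hball
      rw [Metric.mem_ball, hzz]
      exact lt_of_lt_of_le hzd (min_le_right _ _)
    have hest := shift_est ℓ hℓ L f hlip x x' z hx hx' hz hz'mem h0
    have h2Ld : 2 * L * dist x x' < ε / 2 := by
      have : 2 * L * dist x x' < 2 * L * (ε / (4 * L)) := by
        apply mul_lt_mul_of_pos_left hd (by positivity)
      have h2 : 2 * L * (ε / (4 * L)) = ε / 2 := by field_simp; ring
      linarith
    refine ⟨z', hz'mem, by rw [hzz]; exact lt_of_lt_of_le hzd (min_le_left _ _), ?_⟩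
    linarith
end
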